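/- arXiv:1606.01848 — 6 statements merged into one kernel-verified Lean document; each statement's English description precedes it below -/
import Mathlib

section
/- For finite simple graphs G₁ and G₂, the fractional chromatic number of their join satisfies χ_f(G₁ + G₂) = χ_f(G₁) + χ_f(G₂). -/
open Module

/-- An orthogonal representation (OR) of a simple graph `G` in `ℂ^d`: an injective map from the
vertices of `G` to one-dimensional subspaces of `ℂ^d` such that adjacent vertices are mapped to
orthogonal subspaces. -/
def IsOrthRep {V : Type*} (G : SimpleGraph V) (d : ℕ)
    (φ : V → Submodule ℂ (EuclideanSpace ℂ (Fin d))) : Prop :=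
  Function.Injective φ ∧ (∀ v, Module.finrank ℂ (φ v) = 1) ∧
    ∀ u v : V, G.Adj u v → φ u ≤ (φ v)ᗮ

/-- A faithful orthogonal representation (FOR) of a simple graph `G` in `ℂ^d`: an injective map
from the vertices of `G` to one-dimensional subspaces of `ℂ^d` such that two distinct vertices
are adjacent if and only if their images are orthogonal subspaces. -/
def IsFaithfulOrthRep {V : Type*} (G : SimpleGraph V) (d : ℕ)
    (φ : V → Submodule ℂ (EuclideanSpace ℂ (Fin d))) : Prop :=
  Function.Injective φ ∧ (∀ v, Module.finrank ℂ (φ v) = 1) ∧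
    ∀ u v : V, u ≠ v → (G.Adj u v ↔ φ u ≤ (φ v)ᗮ)

/-- `G` admits an orthogonal representation in `ℂ^d`. -/
def HasOR {V : Type*} (G : SimpleGraph V) (d : ℕ) : Prop := ∃ φ, IsOrthRep G d φ

/-- `G` admits a faithful orthogonal representation in `ℂ^d`. -/
def HasFOR {V : Type*} (G : SimpleGraph V) (d : ℕ) : Prop := ∃ φ, IsFaithfulOrthRep G d φ

/-- `ξ(G)`: the smallest dimension `d` such that `G` admits an orthogonal representation
in `ℂ^d`. -/
noncomputable def xi {V : Type*} (G : SimpleGraph V) : ℕ := sInf {d | HasOR G d}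

/-- `Ξ(G)`: the smallest dimension `d` such that `G` admits a faithful orthogonal representation
in `ℂ^d`. -/
noncomputable def Xi {V : Type*} (G : SimpleGraph V) : ℕ := sInf {d | HasFOR G d}

/-- A `b`-fold coloring of `G` with `a` colors: each vertex receives a set of `b` colors out of
`a` colors such that adjacent vertices receive disjoint sets. -/
def HasFoldColoring {V : Type*} (G : SimpleGraph V) (a b : ℕ) : Prop :=
  ∃ c : V → Finset (Fin a), (∀ v, (c v).card = b) ∧
    ∀ u v : V, G.Adj u v → Disjoint (c u) (c v)

/-- The fractional chromatic number `χ_f(G)`: the infimum of `a / b` over all `b`-fold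
colorings of `G` with `a` colors. -/
noncomputable def fracChrom {V : Type*} (G : SimpleGraph V) : ℝ :=
  sInf {x : ℝ | ∃ a b : ℕ, 0 < b ∧ HasFoldColoring G a b ∧ x = (a : ℝ) / b}

/-- The join `G₁ + G₂` of two graphs: their disjoint union together with one additional edge
between every pair of vertices taken one from each graph. -/
def graphJoin {V₁ V₂ : Type*} (G₁ : SimpleGraph V₁) (G₂ : SimpleGraph V₂) :
    SimpleGraph (V₁ ⊕ V₂) :=
  (G₁ ⊕g G₂) ⊔ completeBipartiteGraph V₁ V₂


private lemma fracSet_nonempty {V : Type*} [Fintype V] (G : SimpleGraph V) :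
    {x : ℝ | ∃ a b : ℕ, 0 < b ∧ HasFoldColoring G a b ∧ x = (a : ℝ) / b}.Nonempty := by
  refine ⟨(Fintype.card V : ℝ) / 1, Fintype.card V, 1, one_pos, ⟨fun v => {Fintype.equivFin V v}, fun v => rfl, fun u v huv => ?_⟩, by norm_num⟩
  simp only [Finset.disjoint_singleton]
  exact fun h => huv.ne ((Fintype.equivFin V).injective h)

private lemma fracSet_bddBelow {V : Type*} (G : SimpleGraph V) :
    BddBelow {x : ℝ | ∃ a b : ℕ, 0 < b ∧ HasFoldColoring G a b ∧ x = (a : ℝ) / b} := by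
  refine ⟨0, fun x hx => ?_⟩
  obtain ⟨a, b, hb, _, rfl⟩ := hx
  positivity

private lemma fracChrom_le {V : Type*} {G : SimpleGraph V} {a b : ℕ} (hb : 0 < b)
    (h : HasFoldColoring G a b) : fracChrom G ≤ (a : ℝ) / b :=
  csInf_le (fracSet_bddBelow G) ⟨a, b, hb, h, rfl⟩

private lemma join_adj_ll {V₁ V₂ : Type*} {G₁ : SimpleGraph V₁} {G₂ : SimpleGraph V₂}
    {u v : V₁} (h : (graphJoin G₁ G₂).Adj (Sum.inl u) (Sum.inl v)) : G₁.Adj u v := by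
  simpa [graphJoin] using h

private lemma join_adj_rr {V₁ V₂ : Type*} {G₁ : SimpleGraph V₁} {G₂ : SimpleGraph V₂}
    {u v : V₂} (h : (graphJoin G₁ G₂).Adj (Sum.inr u) (Sum.inr v)) : G₂.Adj u v := by
  simpa [graphJoin] using h

private lemma join_adj_lr {V₁ V₂ : Type*} {G₁ : SimpleGraph V₁} {G₂ : SimpleGraph V₂}
    (u : V₁) (v : V₂) : (graphJoin G₁ G₂).Adj (Sum.inl u) (Sum.inr v) := by
  simp [graphJoin]

private lemma join_hasFoldColoring {V₁ V₂ : Type*} {G₁ : SimpleGraph V₁} {G₂ : SimpleGraph V₂}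
    {a₁ b₁ a₂ b₂ : ℕ} (h₁ : HasFoldColoring G₁ a₁ b₁) (h₂ : HasFoldColoring G₂ a₂ b₂) :
    HasFoldColoring (graphJoin G₁ G₂) (a₁ * b₂ + a₂ * b₁) (b₁ * b₂) := by
  obtain ⟨c₁, hc₁, hd₁⟩ := h₁
  obtain ⟨c₂, hc₂, hd₂⟩ := h₂
  refine ⟨fun v => Sum.rec
    (fun v₁ => (c₁ v₁ ×ˢ (Finset.univ : Finset (Fin b₂))).map
      (finProdFinEquiv.toEmbedding.trans (Fin.castAddEmb (a₂ * b₁))))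
    (fun v₂ => (c₂ v₂ ×ˢ (Finset.univ : Finset (Fin b₁))).map
      (finProdFinEquiv.toEmbedding.trans (Fin.natAddEmb (a₁ * b₂)))) v, ?_, ?_⟩
  · rintro (v | v) <;>
      simp [hc₁, hc₂, Finset.card_map, Finset.card_product, mul_comm]
  · have key : ∀ (x : Fin a₁ × Fin b₂) (y : Fin a₂ × Fin b₁),
        ((Fin.castAddEmb (a₂ * b₁)) (finProdFinEquiv x) : Fin (a₁ * b₂ + a₂ * b₁)) ≠
          (Fin.natAddEmb (a₁ * b₂)) (finProdFinEquiv y) := by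
      intro x y h
      have h1 : ((finProdFinEquiv x : Fin (a₁ * b₂)) : ℕ) < a₁ * b₂ := (finProdFinEquiv x).isLt
      have h2 : ((Fin.castAddEmb (a₂ * b₁)) (finProdFinEquiv x) : ℕ)
          = ((finProdFinEquiv x : Fin (a₁ * b₂)) : ℕ) := rfl
      have h3 : ((Fin.natAddEmb (a₁ * b₂)) (finProdFinEquiv y) : ℕ)
          = a₁ * b₂ + ((finProdFinEquiv y : Fin (a₂ * b₁)) : ℕ) := rfl
      have := congrArg Fin.val h
      omega
    rintro (u | u) (v | v) huv <;>
      rw [Finset.disjoint_left] <;> rintro x hx hx' <;>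
      simp only [Finset.mem_map, Finset.mem_product, Finset.mem_univ, and_true] at hx hx'
    · obtain ⟨p, hp, rfl⟩ := hx
      obtain ⟨q, hq, he⟩ := hx'
      have hpq : q = p :=
        (finProdFinEquiv.toEmbedding.trans (Fin.castAddEmb (a₂ * b₁))).injective he
      subst hpq
      exact Finset.disjoint_left.mp (hd₁ u v (join_adj_ll huv)) hp hq
    · obtain ⟨p, hp, rfl⟩ := hx
      obtain ⟨q, hq, he⟩ := hx'
      exact key p q he.symm
    · obtain ⟨p, hp, rfl⟩ := hx
      obtain ⟨q, hq, he⟩ := hx'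
      exact key q p he
    · obtain ⟨p, hp, rfl⟩ := hx
      obtain ⟨q, hq, he⟩ := hx'
      have hpq := ((finProdFinEquiv.toEmbedding.trans (Fin.natAddEmb (a₁ * b₂))).injective he)
      subst hpq
      exact Finset.disjoint_left.mp (hd₂ u v (join_adj_rr huv)) hp hq

private lemma join_split {V₁ V₂ : Type*} [Fintype V₁] [Fintype V₂]
    {G₁ : SimpleGraph V₁} {G₂ : SimpleGraph V₂} {a b : ℕ}
    (h : HasFoldColoring (graphJoin G₁ G₂) a b) :
    ∃ a₁ a₂ : ℕ, a₁ + a₂ ≤ a ∧ HasFoldColoring G₁ a₁ b ∧ HasFoldColoring G₂ a₂ b := by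
  classical
  obtain ⟨c, hc, hd⟩ := h
  set T₁ : Finset (Fin a) := Finset.univ.biUnion (fun v : V₁ => c (Sum.inl v)) with hT₁
  set T₂ : Finset (Fin a) := Finset.univ.biUnion (fun v : V₂ => c (Sum.inr v)) with hT₂
  have hdisj : Disjoint T₁ T₂ := by
    rw [Finset.disjoint_left]
    intro x hx hx'
    simp only [hT₁, hT₂, Finset.mem_biUnion, Finset.mem_univ, true_and] at hx hx'
    obtain ⟨u, hu⟩ := hx
    obtain ⟨v, hv⟩ := hx'
    exact Finset.disjoint_left.mp (hd _ _ (join_adj_lr u v)) hu hv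
  refine ⟨T₁.card, T₂.card, ?_, ?_, ?_⟩
  · calc T₁.card + T₂.card = (T₁ ∪ T₂).card := (Finset.card_union_of_disjoint hdisj).symm
      _ ≤ (Finset.univ : Finset (Fin a)).card := Finset.card_le_card (Finset.subset_univ _)
      _ = a := by simp
  · have hmem : ∀ (v : V₁) (x : Fin a), x ∈ c (Sum.inl v) → x ∈ T₁ := by
      intro v x hx
      simp only [hT₁, Finset.mem_biUnion, Finset.mem_univ, true_and]
      exact ⟨v, hx⟩
    refine ⟨fun v => (c (Sum.inl v)).attach.map
      ⟨fun x => T₁.equivFin ⟨x.1, hmem v x.1 x.2⟩, fun x y hxy => ?_⟩, fun v => by simp [hc], ?_⟩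
    · have := T₁.equivFin.injective hxy
      rw [Subtype.mk.injEq] at this
      exact Subtype.ext this
    · intro u v huv
      rw [Finset.disjoint_left]
      rintro x hx hx'
      simp only [Finset.mem_map, Finset.mem_attach, true_and, Subtype.exists] at hx hx'
      obtain ⟨p, hp, rfl⟩ := hx
      obtain ⟨q, hq, he⟩ := hx'
      have := T₁.equivFin.injective he
      have hpq : q = p := congrArg Subtype.val this
      subst hpq
      have hadj : (graphJoin G₁ G₂).Adj (Sum.inl u) (Sum.inl v) := by
        simp [graphJoin, huv]
      exact Finset.disjoint_left.mp (hd _ _ hadj) hp hq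
  · have hmem : ∀ (v : V₂) (x : Fin a), x ∈ c (Sum.inr v) → x ∈ T₂ := by
      intro v x hx
      simp only [hT₂, Finset.mem_biUnion, Finset.mem_univ, true_and]
      exact ⟨v, hx⟩
    refine ⟨fun v => (c (Sum.inr v)).attach.map
      ⟨fun x => T₂.equivFin ⟨x.1, hmem v x.1 x.2⟩, fun x y hxy => ?_⟩, fun v => by simp [hc], ?_⟩
    · have := T₂.equivFin.injective hxy
      rw [Subtype.mk.injEq] at this
      exact Subtype.ext this
    · intro u v huv
      rw [Finset.disjoint_left]
      rintro x hx hx'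
      simp only [Finset.mem_map, Finset.mem_attach, true_and, Subtype.exists] at hx hx'
      obtain ⟨p, hp, rfl⟩ := hx
      obtain ⟨q, hq, he⟩ := hx'
      have := T₂.equivFin.injective he
      have hpq : q = p := congrArg Subtype.val this
      subst hpq
      have hadj : (graphJoin G₁ G₂).Adj (Sum.inr u) (Sum.inr v) := by
        simp [graphJoin, huv]
      exact Finset.disjoint_left.mp (hd _ _ hadj) hp hq

/-- For finite simple graphs `G₁` and `G₂`,
`χ_f(G₁ + G₂) = χ_f(G₁) + χ_f(G₂)`. -/
theorem stmt5 {V₁ V₂ : Type*} [Fintype V₁] [Fintype V₂]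
    (G₁ : SimpleGraph V₁) (G₂ : SimpleGraph V₂) :
    fracChrom (graphJoin G₁ G₂) = fracChrom G₁ + fracChrom G₂ := by
  apply le_antisymm
  · -- upper bound
    refine le_of_forall_pos_le_add fun ε hε => ?_
    obtain ⟨x, ⟨a₁, b₁, hb₁, h₁, rfl⟩, hx⟩ :=
      exists_lt_of_csInf_lt (fracSet_nonempty G₁) (lt_add_of_pos_right _ (half_pos hε))
    obtain ⟨y, ⟨a₂, b₂, hb₂, h₂, rfl⟩, hy⟩ :=
      exists_lt_of_csInf_lt (fracSet_nonempty G₂) (lt_add_of_pos_right _ (half_pos hε))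
    have hle := fracChrom_le (Nat.mul_pos hb₁ hb₂) (join_hasFoldColoring h₁ h₂)
    have heq : ((a₁ * b₂ + a₂ * b₁ : ℕ) : ℝ) / ((b₁ * b₂ : ℕ) : ℝ)
        = (a₁ : ℝ) / b₁ + (a₂ : ℝ) / b₂ := by
      have hb₁' : (b₁ : ℝ) ≠ 0 := Nat.cast_ne_zero.mpr hb₁.ne'
      have hb₂' : (b₂ : ℝ) ≠ 0 := Nat.cast_ne_zero.mpr hb₂.ne'
      push_cast
      field_simp
    rw [heq] at hle
    calc fracChrom (graphJoin G₁ G₂) ≤ (a₁ : ℝ) / b₁ + (a₂ : ℝ) / b₂ := hle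
      _ ≤ (fracChrom G₁ + ε / 2) + (fracChrom G₂ + ε / 2) := add_le_add hx.le hy.le
      _ = fracChrom G₁ + fracChrom G₂ + ε := by ring
  · -- lower bound
    refine le_csInf (fracSet_nonempty _) ?_
    rintro x ⟨a, b, hb, h, rfl⟩
    obtain ⟨a₁, a₂, hsum, h₁, h₂⟩ := join_split h
    have l₁ := fracChrom_le hb h₁
    have l₂ := fracChrom_le hb h₂
    have hb' : (0 : ℝ) < b := Nat.cast_pos.mpr hb
    calc fracChrom G₁ + fracChrom G₂ ≤ (a₁ : ℝ) / b + (a₂ : ℝ) / b := add_le_add l₁ l₂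
      _ = ((a₁ + a₂ : ℕ) : ℝ) / b := by push_cast; ring
      _ ≤ (a : ℝ) / b := by
          gcongr
end

section
/- For finite nonempty simple graphs G₁ and G₂ with at least one of them having more than one vertex, the smallest dimension admitting a faithful orthogonal representation of their disjoint union satisfies Ξ(G₁ ∪ G₂) = max(Ξ(G₁), Ξ(G₂)). -/
open Module

/-! ### Auxiliary machinery -/

section Aux

open scoped InnerProductSpace ComplexConjugate

variable {V : Type*}

/-- Vector version of a faithful orthogonal representation, over an arbitrary finite index. -/
def VecRep (G : SimpleGraph V) (ι : Type*) [Fintype ι]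
    (x : V → EuclideanSpace ℂ ι) : Prop :=
  (∀ v, x v ≠ 0) ∧ (Function.Injective fun v => (ℂ ∙ x v : Submodule ℂ (EuclideanSpace ℂ ι))) ∧
    ∀ u v, u ≠ v → (G.Adj u v ↔ ⟪x u, x v⟫_ℂ = 0)

lemma span_singleton_le_orth_iff {E : Type*} [NormedAddCommGroup E] [InnerProductSpace ℂ E]
    (a b : E) : (ℂ ∙ a) ≤ (ℂ ∙ b)ᗮ ↔ ⟪b, a⟫_ℂ = 0 := by
  rw [Submodule.span_singleton_le_iff_mem, Submodule.mem_orthogonal_singleton_iff_inner_right]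

lemma span_eq_span_of_smul {E : Type*} [NormedAddCommGroup E] [InnerProductSpace ℂ E]
    {a b : E} {c : ℂ} (h : a = c • b) (ha : a ≠ 0) : (ℂ ∙ a) = (ℂ ∙ b : Submodule ℂ E) := by
  have hc : c ≠ 0 := by rintro rfl; rw [zero_smul] at h; exact ha h
  apply le_antisymm
  · rw [Submodule.span_singleton_le_iff_mem, Submodule.mem_span_singleton]
    exact ⟨c, h.symm⟩
  · rw [Submodule.span_singleton_le_iff_mem, Submodule.mem_span_singleton]
    exact ⟨c⁻¹, by rw [h, smul_smul, inv_mul_cancel₀ hc, one_smul]⟩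

lemma exists_smul_of_span_eq {E : Type*} [NormedAddCommGroup E] [InnerProductSpace ℂ E]
    {a b : E} (h : (ℂ ∙ a) = (ℂ ∙ b : Submodule ℂ E)) : ∃ c : ℂ, a = c • b := by
  have : a ∈ (ℂ ∙ b : Submodule ℂ E) := h ▸ Submodule.mem_span_singleton_self a
  obtain ⟨c, hc⟩ := Submodule.mem_span_singleton.mp this
  exact ⟨c, hc.symm⟩

lemma exists_span_of_finrank_one {E : Type*} [NormedAddCommGroup E] [InnerProductSpace ℂ E]
    [FiniteDimensional ℂ E] {p : Submodule ℂ E} (hp : finrank ℂ p = 1) :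
    ∃ a : E, a ≠ 0 ∧ p = (ℂ ∙ a : Submodule ℂ E) := by
  have hbot : p ≠ ⊥ := by intro h; rw [h, finrank_bot] at hp; omega
  obtain ⟨a, ha, ha0⟩ := (Submodule.ne_bot_iff p).mp hbot
  have hle : (ℂ ∙ a : Submodule ℂ E) ≤ p := (Submodule.span_singleton_le_iff_mem a p).mpr ha
  have heq := Submodule.eq_of_le_of_finrank_le hle
    (by rw [hp, finrank_span_singleton ha0])
  exact ⟨a, ha0, heq.symm⟩

lemma hasFOR_iff_vecRep {G : SimpleGraph V} {d : ℕ} :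
    HasFOR G d ↔ ∃ x : V → EuclideanSpace ℂ (Fin d), VecRep G (Fin d) x := by
  constructor
  · rintro ⟨φ, hinj, hrank, hiff⟩
    choose a ha0 hspan using fun v => exists_span_of_finrank_one (hrank v)
    refine ⟨a, ha0, ?_, ?_⟩
    · intro u v h
      apply hinj
      rw [hspan u, hspan v]
      exact h
    · intro u v hne
      rw [hiff u v hne, hspan u, hspan v, span_singleton_le_orth_iff, inner_eq_zero_symm]
  · rintro ⟨x, h0, hinj, hiff⟩
    exact ⟨fun v => ℂ ∙ x v, hinj, fun v => finrank_span_singleton (h0 v),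
      fun u v hne => by rw [hiff u v hne, span_singleton_le_orth_iff, inner_eq_zero_symm]⟩

lemma vecRep_reindex {G : SimpleGraph V} {ι κ : Type*} [Fintype ι] [Fintype κ] (e : ι ≃ κ)
    {x : V → EuclideanSpace ℂ ι} (hx : VecRep G ι x) (y : V → EuclideanSpace ℂ κ)
    (hy : ∀ v k, y v k = x v (e.symm k)) : VecRep G κ y := by
  obtain ⟨h0, hinj, hiff⟩ := hx
  have hinner : ∀ u v, ⟪y u, y v⟫_ℂ = ⟪x u, x v⟫_ℂ := by
    intro u v
    rw [PiLp.inner_apply, PiLp.inner_apply]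
    simp only [RCLike.inner_apply', hy]
    exact Equiv.sum_comp e.symm (fun i => (starRingEnd ℂ) (x u i) * x v i)
  refine ⟨?_, ?_, ?_⟩
  · intro v hv
    apply h0 v
    ext i
    have h2 := congrFun (congrArg WithLp.ofLp hv) (e i)
    rw [hy] at h2
    rw [Equiv.symm_apply_apply] at h2
    simpa using h2
  · intro u v h
    obtain ⟨c, hc⟩ := exists_smul_of_span_eq h
    have hx' : x u = c • x v := by
      ext i
      have h2 := congrFun (congrArg WithLp.ofLp hc) (e i)
      rw [PiLp.smul_apply, hy, hy, Equiv.symm_apply_apply] at h2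
      simpa [smul_eq_mul] using h2
    exact hinj (span_eq_span_of_smul hx' (h0 u))
  · intro u v hne
    rw [hinner]
    exact hiff u v hne

lemma vecRep_extend {G : SimpleGraph V} {ι κ : Type*} [Fintype ι] [Fintype κ]
    {x : V → EuclideanSpace ℂ ι} (hx : VecRep G ι x) (y : V → EuclideanSpace ℂ (ι ⊕ κ))
    (hyl : ∀ v i, y v (Sum.inl i) = x v i) (hyr : ∀ v k, y v (Sum.inr k) = 0) :
    VecRep G (ι ⊕ κ) y := by
  obtain ⟨h0, hinj, hiff⟩ := hx
  have hinner : ∀ u v, ⟪y u, y v⟫_ℂ = ⟪x u, x v⟫_ℂ := by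
    intro u v
    rw [PiLp.inner_apply, PiLp.inner_apply]
    rw [Fintype.sum_sum_type]
    simp only [RCLike.inner_apply, hyl, hyr, map_zero, mul_zero, Finset.sum_const_zero,
      add_zero]
  refine ⟨?_, ?_, ?_⟩
  · intro v hv
    apply h0 v
    ext i
    have h2 := congrFun (congrArg WithLp.ofLp hv) (Sum.inl i)
    rw [hyl] at h2
    simpa using h2
  · intro u v h
    obtain ⟨c, hc⟩ := exists_smul_of_span_eq h
    have hx' : x u = c • x v := by
      ext i
      have h2 := congrFun (congrArg WithLp.ofLp hc) (Sum.inl i)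
      rw [PiLp.smul_apply, hyl, hyl] at h2
      simpa [smul_eq_mul] using h2
    exact hinj (span_eq_span_of_smul hx' (h0 u))
  · intro u v hne
    rw [hinner]
    exact hiff u v hne

lemma hasFOR_mono {G : SimpleGraph V} {d d' : ℕ} (h : HasFOR G d) (hdd : d ≤ d') :
    HasFOR G d' := by
  obtain ⟨x, hx⟩ := hasFOR_iff_vecRep.mp h
  apply hasFOR_iff_vecRep.mpr
  have h1 := vecRep_extend hx
    (fun v => (WithLp.toLp 2 (fun s => Sum.elim (x v).ofLp 0 s) : EuclideanSpace ℂ (Fin d ⊕ Fin (d' - d))))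
    (fun v i => rfl) (fun v k => rfl)
  have e := finSumFinEquiv.trans (finCongr (by omega : d + (d' - d) = d'))
  exact ⟨_, vecRep_reindex e h1
    (fun v => (WithLp.toLp 2 (fun k => Sum.elim (x v).ofLp 0 (e.symm k)) : EuclideanSpace ℂ (Fin d')))
    (fun v k => rfl)⟩

/-- Every finite graph has a faithful orthogonal representation in some dimension. -/
lemma exists_hasFOR [Fintype V] (G : SimpleGraph V) : ∃ n, HasFOR G n := by
  classical
  set eCoef : V → V × V → ℂ := fun v p =>
    if G.Adj p.1 p.2 then (if v = p.1 then 1 else if v = p.2 then -(1/2 : ℂ) else 0) else 0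
    with heCoef
  have ece : ∀ (t a b : V), eCoef t (a, b) =
      if G.Adj a b then (if t = a then 1 else if t = b then -(1/2 : ℂ) else 0) else 0 :=
    fun t a b => by simp [heCoef]
  set x : V → EuclideanSpace ℂ (Unit ⊕ V ⊕ V × V) := fun v =>
    (WithLp.toLp 2 (Sum.elim (fun _ => (1 : ℂ))
      (Sum.elim (fun w => if w = v then (1 : ℂ) else 0) (fun p => eCoef v p))) :
      EuclideanSpace ℂ (Unit ⊕ V ⊕ V × V)) with hx
  have key : ∀ u v : V, u ≠ v → ⟪x u, x v⟫_ℂ = if G.Adj u v then 0 else 1 := by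
    intro u v hne
    have hunit : (∑ _ : Unit, (starRingEnd ℂ) (1 : ℂ) * 1) = 1 := by simp
    have hvert : (∑ w : V, (starRingEnd ℂ) (if w = u then (1:ℂ) else 0) *
        (if w = v then (1:ℂ) else 0)) = 0 := by
      apply Finset.sum_eq_zero
      intro w _
      rcases eq_or_ne w u with rfl | h1
      · simp [hne]
      · simp [h1]
    have hedge : (∑ p : V × V, (starRingEnd ℂ) (eCoef u p) * eCoef v p) =
        if G.Adj u v then -1 else 0 := by
      have hconj2 : (starRingEnd ℂ) (-(1/2 : ℂ)) = -(1/2 : ℂ) := by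
        rw [map_neg, map_div₀, map_one, map_ofNat]
      by_cases hadj : G.Adj u v
      · rw [if_pos hadj]
        have hsub : (∑ p : V × V, (starRingEnd ℂ) (eCoef u p) * eCoef v p) =
            ∑ p ∈ ({(u, v), (v, u)} : Finset (V × V)), (starRingEnd ℂ) (eCoef u p) * eCoef v p := by
          refine (Finset.sum_subset (Finset.subset_univ _) ?_).symm
          rintro ⟨a, b⟩ - hp
          simp only [Finset.mem_insert, Finset.mem_singleton, Prod.mk.injEq, not_or,
            not_and] at hp
          obtain ⟨hp1, hp2⟩ := hp
          rw [ece, ece]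
          by_cases hab : G.Adj a b
          · by_cases hva : v = a
            · by_cases hua : u = a
              · exact absurd (hua.trans hva.symm) hne
              · have hub : u ≠ b := fun hc => hp2 hva.symm hc.symm
                simp [hab, hua, hub]
            · by_cases hvb : v = b
              · have hua : u ≠ a := fun hc => hp1 hc.symm hvb.symm
                have hub : u ≠ b := fun hc => hne (hc.trans hvb.symm)
                simp [hab, hua, hub]
              · simp [hab, hva, hvb]
          · simp [hab]
        rw [hsub, Finset.sum_pair (by simp [Prod.ext_iff]; intro h; exact absurd h hne)]
        have h1 : eCoef u (u, v) = 1 := by rw [ece]; simp [hadj]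
        have h2 : eCoef v (u, v) = -(1/2 : ℂ) := by rw [ece]; simp [hadj, Ne.symm hne]
        have h3 : eCoef u (v, u) = -(1/2 : ℂ) := by rw [ece]; simp [hadj.symm, hne]
        have h4 : eCoef v (v, u) = 1 := by rw [ece]; simp [hadj.symm]
        rw [h1, h2, h3, h4, hconj2, map_one]
        ring
      · rw [if_neg hadj]
        apply Finset.sum_eq_zero
        rintro ⟨a, b⟩ -
        rw [ece, ece]
        by_cases hab : G.Adj a b
        · by_cases hua : u = a
          · have hvb : v ≠ b := fun hc => hadj (by rw [hua, hc]; exact hab)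
            have hva : v ≠ a := fun hc => hne (hua.trans hc.symm)
            simp [hab, hva, hvb]
          · by_cases hub : u = b
            · have hva : v ≠ a := fun hc => hadj (by rw [hub, hc]; exact hab.symm)
              have hvb : v ≠ b := fun hc => hne (hub.trans hc.symm)
              simp [hab, hva, hvb]
            · simp [hab, hua, hub]
        · simp [hab]
    rw [PiLp.inner_apply]
    simp only [RCLike.inner_apply', hx, WithLp.ofLp_toLp, Fintype.sum_sum_type, Sum.elim_inl, Sum.elim_inr]
    rw [hunit, hvert, hedge]
    by_cases hadj : G.Adj u v
    · rw [if_pos hadj, if_pos hadj]; ring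
    · rw [if_neg hadj, if_neg hadj]; ring
  have hrep : VecRep G (Unit ⊕ V ⊕ V × V) x := by
    refine ⟨?_, ?_, ?_⟩
    · intro v hv
      have := congrFun (congrArg WithLp.ofLp hv) (Sum.inl ())
      simp [hx] at this
    · intro u v h
      obtain ⟨c, hc⟩ := exists_smul_of_span_eq h
      have h1 := congrFun (congrArg WithLp.ofLp hc) (Sum.inl ())
      simp only [hx, WithLp.ofLp_toLp, Sum.elim_inl, PiLp.smul_apply, smul_eq_mul, mul_one] at h1
      have h2 := congrFun (congrArg WithLp.ofLp hc) (Sum.inr (Sum.inl u))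
      simp only [hx, WithLp.ofLp_toLp, Sum.elim_inl, Sum.elim_inr, PiLp.smul_apply, smul_eq_mul, ← h1,
        one_mul, if_pos rfl] at h2
      by_contra hne
      rw [if_neg hne] at h2
      exact one_ne_zero h2
    · intro u v hne
      rw [key u v hne]
      by_cases hadj : G.Adj u v <;> simp [hadj]
  have e := Fintype.equivFin (Unit ⊕ V ⊕ V × V)
  exact ⟨_, hasFOR_iff_vecRep.mpr ⟨_, vecRep_reindex e hrep
    (fun v => (WithLp.toLp 2 (fun k => x v (e.symm k)) : EuclideanSpace ℂ (Fin (Fintype.card (Unit ⊕ V ⊕ V × V)))))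
    (fun v k => rfl)⟩⟩

lemma hasFOR_sum_left {V₁ V₂ : Type*} {G₁ : SimpleGraph V₁} {G₂ : SimpleGraph V₂} {d : ℕ}
    (h : HasFOR (G₁ ⊕g G₂) d) : HasFOR G₁ d := by
  obtain ⟨φ, hinj, hrank, hiff⟩ := h
  refine ⟨φ ∘ Sum.inl, hinj.comp Sum.inl_injective, fun v => hrank _, fun u v hne => ?_⟩
  have := hiff (Sum.inl u) (Sum.inl v) (fun hc => hne (Sum.inl_injective hc))
  exact this

lemma hasFOR_sum_right {V₁ V₂ : Type*} {G₁ : SimpleGraph V₁} {G₂ : SimpleGraph V₂} {d : ℕ}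
    (h : HasFOR (G₁ ⊕g G₂) d) : HasFOR G₂ d := by
  obtain ⟨φ, hinj, hrank, hiff⟩ := h
  refine ⟨φ ∘ Sum.inr, hinj.comp Sum.inr_injective, fun v => hrank _, fun u v hne => ?_⟩
  have := hiff (Sum.inr u) (Sum.inr v) (fun hc => hne (Sum.inr_injective hc))
  exact this

lemma hasFOR_two_le {G : SimpleGraph V} {d : ℕ} {u v : V} (huv : u ≠ v) (h : HasFOR G d) :
    2 ≤ d := by
  obtain ⟨φ, hinj, hrank, _⟩ := h
  have hne : φ u ≠ φ v := fun he => huv (hinj he)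
  have hinf : finrank ℂ (φ u ⊓ φ v : Submodule ℂ (EuclideanSpace ℂ (Fin d))) = 0 := by
    by_contra h0
    have h1 : finrank ℂ (φ u ⊓ φ v : Submodule ℂ (EuclideanSpace ℂ (Fin d))) ≤ 1 :=
      (hrank u) ▸ Submodule.finrank_mono inf_le_left
    have h2 : finrank ℂ (φ u ⊓ φ v : Submodule ℂ (EuclideanSpace ℂ (Fin d))) = 1 := by omega
    have h3 : (φ u ⊓ φ v) = φ u :=
      Submodule.eq_of_le_of_finrank_le inf_le_left (by rw [h2, hrank u])
    have hle : φ u ≤ φ v := h3 ▸ inf_le_right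
    exact hne (Submodule.eq_of_le_of_finrank_le hle (by rw [hrank u, hrank v]))
  have hsup : finrank ℂ ((φ u ⊔ φ v : Submodule ℂ (EuclideanSpace ℂ (Fin d)))) = 2 := by
    have h4 := Submodule.finrank_sup_add_finrank_inf_eq (φ u) (φ v)
    rw [hinf, hrank u, hrank v] at h4
    omega
  calc 2 = finrank ℂ ((φ u ⊔ φ v : Submodule ℂ (EuclideanSpace ℂ (Fin d)))) := hsup.symm
    _ ≤ finrank ℂ (EuclideanSpace ℂ (Fin d)) := Submodule.finrank_le _
    _ = d := finrank_euclideanSpace_fin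

lemma exists_inner_ne_zero {E : Type*} [NormedAddCommGroup E] [InnerProductSpace ℂ E]
    {ι : Type*} (s : Finset ι) (c : ι → E) (hc : ∀ i ∈ s, c i ≠ 0) :
    ∃ h : E, ∀ i ∈ s, ⟪c i, h⟫_ℂ ≠ 0 := by
  classical
  induction s using Finset.induction_on with
  | empty => exact ⟨0, by simp⟩
  | @insert a s ha ih =>
    obtain ⟨h, hh⟩ := ih (fun i hi => hc i (Finset.mem_insert_of_mem hi))
    have hca : c a ≠ 0 := hc a (Finset.mem_insert_self a s)
    obtain ⟨t, ht⟩ := Infinite.exists_notMem_finset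
      ((insert a s).image (fun i => -⟪c i, h⟫_ℂ / ⟪c i, c a⟫_ℂ))
    refine ⟨h + t • c a, ?_⟩
    intro i hi
    rw [inner_add_right, inner_smul_right]
    intro hzero
    rcases eq_or_ne (⟪c i, c a⟫_ℂ) 0 with hz | hz
    · have hia : i ≠ a := by rintro rfl; exact hca (inner_self_eq_zero.mp hz)
      have his : i ∈ s := (Finset.mem_insert.mp hi).resolve_left hia
      rw [hz, mul_zero, add_zero] at hzero
      exact hh i his hzero
    · apply ht
      refine Finset.mem_image.mpr ⟨i, hi, ?_⟩
      field_simp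
      linear_combination -hzero

/-- The key construction: combining FORs of `G₁` and `G₂` into one of their disjoint sum,
in the same dimension `d ≥ 2`. -/
lemma hasFOR_sum_of {V₁ V₂ : Type*} [Fintype V₁] [Fintype V₂] [Nonempty V₁] [Nonempty V₂]
    (G₁ : SimpleGraph V₁) (G₂ : SimpleGraph V₂) {d : ℕ} (hd : 2 ≤ d)
    (h₁ : HasFOR G₁ d) (h₂ : HasFOR G₂ d) : HasFOR (G₁ ⊕g G₂) d := by
  classical
  obtain ⟨x, hx0, hxinj, hxiff⟩ := hasFOR_iff_vecRep.mp h₁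
  obtain ⟨y, hy0, hyinj, hyiff⟩ := hasFOR_iff_vecRep.mp h₂
  -- a nonzero vector orthogonal to each `x u`
  have hzex : ∀ u : V₁, ∃ zz : EuclideanSpace ℂ (Fin d), zz ≠ 0 ∧ ⟪x u, zz⟫_ℂ = 0 := by
    intro u
    have hne : ((ℂ ∙ x u : Submodule ℂ (EuclideanSpace ℂ (Fin d)))ᗮ) ≠ ⊥ := by
      intro hbot
      have h1 := Submodule.finrank_add_finrank_orthogonal
        (K := (ℂ ∙ x u : Submodule ℂ (EuclideanSpace ℂ (Fin d))))
      rw [hbot, finrank_bot, finrank_span_singleton (hx0 u), finrank_euclideanSpace_fin] at h1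
      omega
    obtain ⟨zz, hzmem, hz0⟩ := (Submodule.ne_bot_iff _).mp hne
    exact ⟨zz, hz0, Submodule.mem_orthogonal_singleton_iff_inner_right.mp hzmem⟩
  choose z hz0 hzx using hzex
  -- a unit vector `h` not orthogonal to any of the relevant vectors
  obtain ⟨h₀, hh₀⟩ := exists_inner_ne_zero (Finset.univ : Finset ((V₁ ⊕ V₁) ⊕ V₂))
    (Sum.elim (Sum.elim x z) y)
    (by rintro ((u | u) | w) _
        · exact hx0 u
        · exact hz0 u
        · exact hy0 w)
  have hxh : ∀ u, ⟪x u, h₀⟫_ℂ ≠ 0 := fun u => hh₀ (Sum.inl (Sum.inl u)) (Finset.mem_univ _)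
  have hzh : ∀ u, ⟪z u, h₀⟫_ℂ ≠ 0 := fun u => hh₀ (Sum.inl (Sum.inr u)) (Finset.mem_univ _)
  have hyh : ∀ w, ⟪y w, h₀⟫_ℂ ≠ 0 := fun w => hh₀ (Sum.inr w) (Finset.mem_univ _)
  have h00 : h₀ ≠ 0 := by
    intro hc
    obtain ⟨u⟩ := ‹Nonempty V₁›
    exact hxh u (by rw [hc, inner_zero_right])
  have hnorm0 : (‖h₀‖ : ℂ) ≠ 0 := by
    simpa using norm_ne_zero_iff.mpr h00
  set h : EuclideanSpace ℂ (Fin d) := (‖h₀‖ : ℂ)⁻¹ • h₀ with hdef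
  have hxh' : ∀ u, ⟪x u, h⟫_ℂ ≠ 0 := fun u => by
    rw [hdef, inner_smul_right]; exact mul_ne_zero (inv_ne_zero hnorm0) (hxh u)
  have hzh' : ∀ u, ⟪z u, h⟫_ℂ ≠ 0 := fun u => by
    rw [hdef, inner_smul_right]; exact mul_ne_zero (inv_ne_zero hnorm0) (hzh u)
  have hyh' : ∀ w, ⟪y w, h⟫_ℂ ≠ 0 := fun w => by
    rw [hdef, inner_smul_right]; exact mul_ne_zero (inv_ne_zero hnorm0) (hyh w)
  have hhy : ∀ w, ⟪h, y w⟫_ℂ ≠ 0 := fun w hc =>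
    hyh' w (by rw [← inner_conj_symm, hc, map_zero])
  have hh1 : ⟪h, h⟫_ℂ = 1 := by
    rw [hdef, inner_smul_left, inner_smul_right, inner_self_eq_norm_sq_to_K]
    have hconj : (starRingEnd ℂ) ((‖h₀‖ : ℂ)⁻¹) = (‖h₀‖ : ℂ)⁻¹ := by
      rw [map_inv₀, Complex.conj_ofReal]
    rw [hconj, pow_two]
    field_simp
    rfl
  -- choose the phase ζ on the unit circle avoiding finitely many bad values
  set g : (V₁ × V₂) ⊕ (V₁ × V₂) → ℂ := Sum.elim
    (fun p => 1 - ⟪x p.1, y p.2⟫_ℂ / (⟪h, y p.2⟫_ℂ * ⟪x p.1, h⟫_ℂ))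
    (fun p => 1 - ⟪z p.1, y p.2⟫_ℂ / (⟪h, y p.2⟫_ℂ * ⟪z p.1, h⟫_ℂ)) with hg
  have hden : ∀ r : ℝ, (1 - (r : ℂ) * Complex.I) ≠ 0 := by
    intro r hc
    have := congrArg Complex.re hc
    simp at this
  have hden' : ∀ r : ℝ, (1 + (r : ℂ) * Complex.I) ≠ 0 := by
    intro r hc
    have := congrArg Complex.re hc
    simp at this
  have hcirc : Set.Infinite
      (Set.range (fun t : ℝ => (1 + (t : ℂ) * Complex.I) / (1 - (t : ℂ) * Complex.I))) := by
    apply Set.infinite_range_of_injective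
    intro s t hst
    rw [div_eq_div_iff (hden s) (hden t)] at hst
    have h2 : ((s : ℂ) - t) * (2 * Complex.I) = 0 := by linear_combination hst
    rcases mul_eq_zero.mp h2 with h3 | h3
    · have : (s : ℂ) = t := by linear_combination h3
      exact_mod_cast this
    · exfalso
      apply Complex.I_ne_zero
      have : (2 : ℂ) ≠ 0 := by norm_num
      simpa using h3
  obtain ⟨ζ, hζmem, hζbad⟩ := (hcirc.diff (Finset.finite_toSet (Finset.univ.image g))).nonempty
  obtain ⟨t0, ht0⟩ := hζmem
  have hζcirc : ζ * (starRingEnd ℂ) ζ = 1 := by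
    rw [← ht0]
    rw [map_div₀, map_sub, map_add, map_one, map_mul, Complex.conj_ofReal, Complex.conj_I]
    field_simp [hden t0, hden' t0]
    ring
  have hζnotbad : ∀ i, ζ ≠ g i := by
    intro i hc
    exact hζbad (by rw [hc]; exact Finset.mem_coe.mpr (Finset.mem_image_of_mem g (Finset.mem_univ i)))
  -- the unitary twist
  set U : EuclideanSpace ℂ (Fin d) → EuclideanSpace ℂ (Fin d) :=
    fun v => v + ((ζ - 1) * ⟪h, v⟫_ℂ) • h with hU
  have key1 : ∀ a b, ⟪U a, U b⟫_ℂ = ⟪a, b⟫_ℂ := by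
    intro a b
    simp only [hU, inner_add_left, inner_add_right, inner_smul_left, inner_smul_right, hh1,
      mul_one, map_mul, map_sub, map_one]
    rw [← inner_conj_symm a h]
    ring_nf
    linear_combination ((starRingEnd ℂ) ⟪h, a⟫_ℂ) * ⟪h, b⟫_ℂ * hζcirc
  have key0 : ∀ a, U a = 0 → a = 0 := by
    intro a ha
    have h5 := key1 a a
    rw [ha, inner_zero_right] at h5
    exact inner_self_eq_zero.mp h5.symm
  have key2 : ∀ (a b : EuclideanSpace ℂ (Fin d)) (c : ℂ), U a - c • U b = U (a - c • b) := by
    intro a b c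
    simp only [hU, inner_sub_right, inner_smul_right]
    module
  have cross : ∀ (a : EuclideanSpace ℂ (Fin d)) (w : V₂), ⟪a, h⟫_ℂ ≠ 0 →
      ζ ≠ 1 - ⟪a, y w⟫_ℂ / (⟪h, y w⟫_ℂ * ⟪a, h⟫_ℂ) → ⟪a, U (y w)⟫_ℂ ≠ 0 := by
    intro a w hah hbad hc
    apply hbad
    simp only [hU, inner_add_right, inner_smul_right] at hc
    have hβ : ⟪h, y w⟫_ℂ * ⟪a, h⟫_ℂ ≠ 0 := mul_ne_zero (hhy w) hah
    have hquot : ⟪a, y w⟫_ℂ / (⟪h, y w⟫_ℂ * ⟪a, h⟫_ℂ) = 1 - ζ := by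
      rw [div_eq_iff hβ]
      linear_combination hc
    rw [hquot]
    ring
  have cross1 : ∀ u w, ⟪x u, U (y w)⟫_ℂ ≠ 0 := fun u w =>
    cross (x u) w (hxh' u) (hζnotbad (Sum.inl (u, w)))
  have cross2 : ∀ u w, ⟪z u, U (y w)⟫_ℂ ≠ 0 := fun u w =>
    cross (z u) w (hzh' u) (hζnotbad (Sum.inr (u, w)))
  -- assemble
  apply hasFOR_iff_vecRep.mpr
  refine ⟨Sum.elim x (fun w => U (y w)), ?_, ?_, ?_⟩
  · rintro (u | w)
    · exact hx0 u
    · intro hc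
      exact hy0 w (key0 _ hc)
  · rintro (u | w) (u' | w') hspan
    · simp only [Sum.elim_inl] at hspan
      exact congrArg Sum.inl (hxinj hspan)
    · exfalso
      simp only [Sum.elim_inl, Sum.elim_inr] at hspan
      obtain ⟨c, hc⟩ := exists_smul_of_span_eq hspan.symm
      apply cross2 u w'
      rw [hc, inner_smul_right]
      have hzxu : ⟪z u, x u⟫_ℂ = 0 := by rw [← inner_conj_symm, hzx u, map_zero]
      rw [hzxu, mul_zero]
    · exfalso
      simp only [Sum.elim_inl, Sum.elim_inr] at hspan
      obtain ⟨c, hc⟩ := exists_smul_of_span_eq hspan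
      apply cross2 u' w
      rw [hc, inner_smul_right]
      have hzxu : ⟪z u', x u'⟫_ℂ = 0 := by rw [← inner_conj_symm, hzx u', map_zero]
      rw [hzxu, mul_zero]
    · simp only [Sum.elim_inr] at hspan
      obtain ⟨c, hc⟩ := exists_smul_of_span_eq hspan
      have h6 : U (y w) - c • U (y w') = 0 := sub_eq_zero.mpr hc
      rw [key2] at h6
      have hyy : y w = c • y w' := sub_eq_zero.mp (key0 _ h6)
      exact congrArg Sum.inr (hyinj (span_eq_span_of_smul hyy (hy0 w)))
  · rintro (u | w) (u' | w') hne
    · have hne' : u ≠ u' := fun hc => hne (by rw [hc])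
      simpa only [Sum.elim_inl, SimpleGraph.sum_adj_inl] using hxiff u u' hne'
    · constructor
      · intro hadj
        simp only [SimpleGraph.sum_adj] at hadj
      · intro hin
        exfalso
        simp only [Sum.elim_inl, Sum.elim_inr] at hin
        exact cross1 u w' hin
    · constructor
      · intro hadj
        simp only [SimpleGraph.sum_adj] at hadj
      · intro hin
        exfalso
        simp only [Sum.elim_inl, Sum.elim_inr] at hin
        apply cross1 u' w
        rw [← inner_conj_symm, hin, map_zero]
    · have hne' : w ≠ w' := fun hc => hne (by rw [hc])
      have h7 := hyiff w w' hne'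
      simp only [Sum.elim_inr]
      rw [key1]
      exact h7

end Aux

/-- For finite nonempty simple graphs `G₁` and `G₂`, at least one of which has
more than one vertex, `Ξ(G₁ ∪ G₂) = max (Ξ(G₁), Ξ(G₂))`. -/
theorem stmt6 {V₁ V₂ : Type*} [Fintype V₁] [Fintype V₂] [Nonempty V₁] [Nonempty V₂]
    (G₁ : SimpleGraph V₁) (G₂ : SimpleGraph V₂)
    (h : 1 < Fintype.card V₁ ∨ 1 < Fintype.card V₂) :
    Xi (G₁ ⊕g G₂) = max (Xi G₁) (Xi G₂) := by
  classical
  obtain ⟨n₁, hn₁⟩ := exists_hasFOR G₁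
  obtain ⟨n₂, hn₂⟩ := exists_hasFOR G₂
  have hX₁ : HasFOR G₁ (Xi G₁) := Nat.sInf_mem (⟨n₁, hn₁⟩ : {d | HasFOR G₁ d}.Nonempty)
  have hX₂ : HasFOR G₂ (Xi G₂) := Nat.sInf_mem (⟨n₂, hn₂⟩ : {d | HasFOR G₂ d}.Nonempty)
  have hD2 : 2 ≤ max (Xi G₁) (Xi G₂) := by
    rcases h with h | h
    · obtain ⟨u, v, huv⟩ := Fintype.one_lt_card_iff_nontrivial.mp h
      exact le_trans (hasFOR_two_le huv hX₁) (le_max_left _ _)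
    · obtain ⟨u, v, huv⟩ := Fintype.one_lt_card_iff_nontrivial.mp h
      exact le_trans (hasFOR_two_le huv hX₂) (le_max_right _ _)
  have hU : HasFOR (G₁ ⊕g G₂) (max (Xi G₁) (Xi G₂)) :=
    hasFOR_sum_of G₁ G₂ hD2 (hasFOR_mono hX₁ (le_max_left _ _))
      (hasFOR_mono hX₂ (le_max_right _ _))
  have hle : Xi (G₁ ⊕g G₂) ≤ max (Xi G₁) (Xi G₂) := Nat.sInf_le hU
  have hXu : HasFOR (G₁ ⊕g G₂) (Xi (G₁ ⊕g G₂)) :=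
    Nat.sInf_mem (⟨_, hU⟩ : {d | HasFOR (G₁ ⊕g G₂) d}.Nonempty)
  have hge : max (Xi G₁) (Xi G₂) ≤ Xi (G₁ ⊕g G₂) :=
    max_le (Nat.sInf_le (hasFOR_sum_left hXu)) (Nat.sInf_le (hasFOR_sum_right hXu))
  exact le_antisymm hle hge
end

section
/- For finite nonempty simple graphs G₁ and G₂ with at least one of them having more than one vertex, the smallest dimension admitting an orthogonal representation of their disjoint union satisfies ξ(G₁ ∪ G₂) = max(ξ(G₁), ξ(G₂)). -/
open Module

namespace Stmt9Aux

open Complex Finset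
open scoped ComplexConjugate

local notation "⟪" x ", " y "⟫" => @inner ℂ _ _ x y

variable {d : ℕ}

/-- `HasOR` phrased with vectors. -/
def VecOR {V : Type*} (G : SimpleGraph V) (d : ℕ) (x : V → EuclideanSpace ℂ (Fin d)) : Prop :=
  (∀ v, x v ≠ 0) ∧ (∀ u v : V, u ≠ v → (Submodule.span ℂ {x u}) ≠ Submodule.span ℂ {x v}) ∧
    ∀ u v : V, G.Adj u v → ⟪x u, x v⟫ = 0

theorem hasOR_iff_vec {V : Type*} (G : SimpleGraph V) (d : ℕ) :
    HasOR G d ↔ ∃ x, VecOR G d x := by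
  constructor
  · rintro ⟨φ, hinj, hrk, hadj⟩
    have h : ∀ v, ∃ x : EuclideanSpace ℂ (Fin d), x ≠ 0 ∧ φ v = Submodule.span ℂ {x} := by
      intro v
      obtain ⟨w, hw0, hwall⟩ := finrank_eq_one_iff'.mp (hrk v)
      refine ⟨(w : EuclideanSpace ℂ (Fin d)), by simpa using hw0, le_antisymm ?_ ?_⟩
      · intro y hy
        obtain ⟨c, hc⟩ := hwall ⟨y, hy⟩
        rw [Submodule.mem_span_singleton]
        exact ⟨c, by simpa using congrArg (Subtype.val) hc⟩
      · rw [Submodule.span_singleton_le_iff_mem]; exact w.2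
    choose x hx0 hxs using h
    refine ⟨x, hx0, ?_, ?_⟩
    · intro u v huv he
      exact huv (hinj (by rw [hxs u, hxs v, he]))
    · intro u v huv
      have h1 : x u ∈ (φ v)ᗮ := (hxs u ▸ hadj u v huv) (Submodule.mem_span_singleton_self _)
      rw [hxs v, Submodule.mem_orthogonal_singleton_iff_inner_left] at h1
      exact h1
  · rintro ⟨x, hx0, hxd, hxadj⟩
    refine ⟨fun v => Submodule.span ℂ {x v}, ?_, ?_, ?_⟩
    · intro u v he
      by_contra hne
      exact hxd u v hne he
    · intro v; exact finrank_span_singleton (hx0 v)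
    · intro u v huv
      rw [Submodule.span_singleton_le_iff_mem,
        Submodule.mem_orthogonal_singleton_iff_inner_left]
      exact hxadj u v huv

/-- Any graph on a fintype has an OR in dimension `card V`. -/
theorem hasOR_card {V : Type*} [Fintype V] (G : SimpleGraph V) :
    HasOR G (Fintype.card V) := by
  rw [hasOR_iff_vec]
  set e := Fintype.equivFin V
  refine ⟨fun v => EuclideanSpace.single (e v) 1, ?_, ?_, ?_⟩
  · intro v hv
    have := congrArg (· (e v)) hv
    simp [EuclideanSpace.single_apply] at this
  · intro u v huv he
    obtain ⟨c, hc⟩ := Submodule.span_singleton_eq_span_singleton.mp he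
    have h1 := congrArg (· (e u)) hc
    have h2 : (e u) ≠ (e v) := fun h => huv (e.injective h)
    have : (c : ℂ) • (EuclideanSpace.single (e u) 1 : EuclideanSpace ℂ (Fin (Fintype.card V))) (e u)
        = (EuclideanSpace.single (e v) 1 : EuclideanSpace ℂ (Fin (Fintype.card V))) (e u) := h1
    rw [EuclideanSpace.single_apply, EuclideanSpace.single_apply] at this
    simp [h2] at this
  · intro u v huv
    have h2 : (e u) ≠ (e v) := fun h => huv.ne (e.injective h)
    rw [EuclideanSpace.inner_single_left]
    simp [EuclideanSpace.single_apply, h2]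

/-- Padding: ORs persist in higher dimensions. -/
theorem hasOR_mono {V : Type*} (G : SimpleGraph V) {d e : ℕ} (hde : d ≤ e)
    (h : HasOR G d) : HasOR G e := by
  rw [hasOR_iff_vec] at h ⊢
  obtain ⟨x, hx0, hxd, hxadj⟩ := h
  set pad : EuclideanSpace ℂ (Fin d) → EuclideanSpace ℂ (Fin e) :=
    fun a => WithLp.toLp 2 (fun i : Fin e => if h : (i : ℕ) < d then a ⟨i, h⟩ else 0) with hpad
  have padsum : ∀ a b : EuclideanSpace ℂ (Fin d),
      (∑ i : Fin e, (starRingEnd ℂ) (pad a i) * pad b i) =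
      ∑ i : Fin d, (starRingEnd ℂ) (a i) * b i := by
    intro a b
    set F : ℕ → ℂ := fun n => if h : n < d then (starRingEnd ℂ) (a ⟨n, h⟩) * b ⟨n, h⟩ else 0 with hF
    have h1 : (∑ i : Fin e, (starRingEnd ℂ) (pad a i) * pad b i) = ∑ i : Fin e, F (i : ℕ) := by
      refine Finset.sum_congr rfl fun i _ => ?_
      by_cases h : (i : ℕ) < d <;> simp [hpad, hF, h]
    have h2 : (∑ i : Fin d, (starRingEnd ℂ) (a i) * b i) = ∑ i : Fin d, F (i : ℕ) := by
      refine Finset.sum_congr rfl fun i _ => ?_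
      simp [hF, i.isLt]
    rw [h1, h2, Fin.sum_univ_eq_sum_range, Fin.sum_univ_eq_sum_range]
    refine (Finset.sum_subset (Finset.range_subset_range.mpr hde) fun n _ hn => ?_).symm
    simp only [Finset.mem_range, not_lt] at hn
    simp [hF, Nat.not_lt.mpr hn]
  have padinner : ∀ a b : EuclideanSpace ℂ (Fin d), ⟪pad a, pad b⟫ = ⟪a, b⟫ := by
    intro a b
    simp only [PiLp.inner_apply, RCLike.inner_apply']
    exact padsum a b
  have padinj : Function.Injective pad := by
    intro a b hab
    ext i
    have := congrArg (· ⟨(i : ℕ), lt_of_lt_of_le i.isLt hde⟩) hab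
    simpa [hpad, i.isLt] using this
  have padsmul : ∀ (c : ℂ) (a : EuclideanSpace ℂ (Fin d)), pad (c • a) = c • pad a := by
    intro c a
    ext i
    by_cases h : (i : ℕ) < d <;> simp [hpad, h, PiLp.smul_apply, smul_eq_mul]
  have pad0 : pad 0 = 0 := by
    ext i
    by_cases h : (i : ℕ) < d <;> simp [hpad, h]
  refine ⟨fun v => pad (x v), ?_, ?_, ?_⟩
  · intro v hv
    exact hx0 v (padinj (hv.trans pad0.symm))
  · intro u v huv he
    obtain ⟨c, hc⟩ := Submodule.span_singleton_eq_span_singleton.mp he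
    have hc' : c • pad (x u) = pad (x v) := hc
    rw [Units.smul_def, ← padsmul] at hc'
    have := padinj hc'
    exact hxd u v huv (Submodule.span_singleton_eq_span_singleton.mpr
      ⟨c, by rw [Units.smul_def]; exact this⟩)
  · intro u v huv
    rw [padinner]
    exact hxadj u v huv

/-! ### The diagonal maps and the Householder reflection -/

/-- Diagonal map with entries `z ^ i`. -/
def dzf (z : ℂ) (a : EuclideanSpace ℂ (Fin d)) : EuclideanSpace ℂ (Fin d) :=
  WithLp.toLp 2 (fun i : Fin d => z ^ (i : ℕ) * a i)

lemma dzf_apply (z : ℂ) (a : EuclideanSpace ℂ (Fin d)) (i : Fin d) :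
    dzf z a i = z ^ (i : ℕ) * a i := rfl

lemma dzf_smul (z c : ℂ) (a : EuclideanSpace ℂ (Fin d)) : dzf z (c • a) = c • dzf z a := by
  ext i
  simp only [dzf, PiLp.toLp_apply, PiLp.smul_apply, smul_eq_mul]
  ring

lemma dzf_inner (z : ℂ) (hz : (starRingEnd ℂ) z * z = 1) (a b : EuclideanSpace ℂ (Fin d)) :
    ⟪dzf z a, dzf z b⟫ = ⟪a, b⟫ := by
  simp only [PiLp.inner_apply, RCLike.inner_apply']
  refine Finset.sum_congr rfl fun i _ => ?_
  have : (starRingEnd ℂ) (dzf z a i) * dzf z b i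
      = ((starRingEnd ℂ) z * z) ^ (i : ℕ) * ((starRingEnd ℂ) (a i) * b i) := by
    simp only [dzf, PiLp.toLp_apply, map_mul, map_pow]
    ring
  rw [this, hz, one_pow, one_mul]

lemma dzf_injective {z : ℂ} (hz : z ≠ 0) : Function.Injective (dzf (d := d) z) := by
  intro a b hab
  ext i
  have := congrArg (· i) hab
  simp only [dzf, PiLp.toLp_apply] at this
  exact mul_left_cancel₀ (pow_ne_zero _ hz) this

/-- The weight vector `(1, 2, …, d)`. -/
def vc (d : ℕ) : Fin d → ℂ := fun i => (((i : ℕ) + 1 : ℕ) : ℂ)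

lemma vc_ne_zero (i : Fin d) : vc d i ≠ 0 :=
  Nat.cast_ne_zero.mpr (Nat.succ_ne_zero _)

lemma conj_vc (i : Fin d) : (starRingEnd ℂ) (vc d i) = vc d i := by
  simp [vc]

/-- `∑ (i+1)²` as a natural number. -/
def sN (d : ℕ) : ℕ := ∑ i : Fin d, ((i : ℕ) + 1) ^ 2

lemma sN_cast_ne_zero (hd : 0 < d) : ((sN d : ℂ)) ≠ 0 := by
  have : 0 < sN d := by
    have : Nonempty (Fin d) := Fin.pos_iff_nonempty.mp hd
    exact Finset.sum_pos (fun i _ => by positivity) Finset.univ_nonempty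
  exact_mod_cast Nat.cast_ne_zero.mpr this.ne'

/-- weighted sum -/
noncomputable def sv (a : Fin d → ℂ) : ℂ := ∑ i, vc d i * a i

lemma sv_vc : sv (vc d) = (sN d : ℂ) := by
  simp only [sv, sN, vc]
  push_cast
  refine Finset.sum_congr rfl fun i _ => by ring

lemma sum_vc_sq : (∑ i, vc d i * vc d i) = (sN d : ℂ) := sv_vc

lemma conj_sv (a : Fin d → ℂ) :
    (starRingEnd ℂ) (sv a) = ∑ i, vc d i * (starRingEnd ℂ) (a i) := by
  simp only [sv, map_sum, map_mul, conj_vc]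

lemma sv_smul (c : ℂ) (a : EuclideanSpace ℂ (Fin d)) : sv (c • a) = c * sv a := by
  simp only [sv, Finset.mul_sum, PiLp.smul_apply, smul_eq_mul]
  refine Finset.sum_congr rfl fun i _ => by ring

lemma sv_single (k : Fin d) (c : ℂ) : sv (EuclideanSpace.single k c) = vc d k * c := by
  simp only [sv, EuclideanSpace.single_apply, mul_ite, mul_zero]
  simp [Finset.sum_ite_eq' Finset.univ k]

/-- The Householder reflection with respect to `vc`. -/
noncomputable def hh (a : EuclideanSpace ℂ (Fin d)) : EuclideanSpace ℂ (Fin d) :=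
  WithLp.toLp 2 (fun i : Fin d => a i - 2 / (sN d : ℂ) * sv a * vc d i)

lemma hh_apply (a : EuclideanSpace ℂ (Fin d)) (i : Fin d) :
    hh a i = a i - 2 / (sN d : ℂ) * sv a * vc d i := rfl

lemma sv_hh (hd : 0 < d) (a : EuclideanSpace ℂ (Fin d)) : sv (hh a) = - sv a := by
  have hN := sN_cast_ne_zero hd
  have e1 : sv (hh a) = ∑ i, (vc d i * a i - 2 / (sN d : ℂ) * sv a * (vc d i * vc d i)) :=
    Finset.sum_congr rfl fun i _ => by rw [hh_apply]; ring
  have e2 : sv (hh a) = sv a - 2 / (sN d : ℂ) * sv a * (sN d : ℂ) := by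
    rw [e1, Finset.sum_sub_distrib, ← Finset.mul_sum, sum_vc_sq]
    rfl
  rw [e2]
  field_simp
  ring

lemma hh_hh (hd : 0 < d) (a : EuclideanSpace ℂ (Fin d)) : hh (hh a) = a := by
  ext i
  rw [hh_apply, sv_hh hd, hh_apply]
  ring

lemma hh_injective (hd : 0 < d) : Function.Injective (hh (d := d)) :=
  Function.LeftInverse.injective (g := hh) (hh_hh hd)

lemma hh_smul (c : ℂ) (a : EuclideanSpace ℂ (Fin d)) : hh (c • a) = c • hh a := by
  ext i
  simp only [hh, PiLp.toLp_apply, sv_smul, PiLp.smul_apply, smul_eq_mul]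
  ring

lemma hh_zero : hh (0 : EuclideanSpace ℂ (Fin d)) = 0 := by
  have : (0 : EuclideanSpace ℂ (Fin d)) = (0 : ℂ) • (0 : EuclideanSpace ℂ (Fin d)) := by
    simp
  rw [this, hh_smul]
  simp

lemma hh_inner (hd : 0 < d) (a b : EuclideanSpace ℂ (Fin d)) : ⟪hh a, hh b⟫ = ⟪a, b⟫ := by
  have hN := sN_cast_ne_zero hd
  simp only [PiLp.inner_apply, RCLike.inner_apply']
  set t : ℂ := 2 / (sN d : ℂ) with ht
  set A : ℂ := (starRingEnd ℂ) (sv a) with hA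
  set B : ℂ := sv b with hB
  have expand : ∀ i : Fin d, (starRingEnd ℂ) (hh a i) * hh b i
      = (starRingEnd ℂ) (a i) * b i
        - t * B * (vc d i * (starRingEnd ℂ) (a i))
        - t * A * (vc d i * b i)
        + t * A * (t * B * (vc d i * vc d i)) := by
    intro i
    have hconj : (starRingEnd ℂ) (hh a i)
        = (starRingEnd ℂ) (a i) - t * A * vc d i := by
      simp only [hh, PiLp.toLp_apply, map_sub, map_mul, conj_vc, map_div₀, map_ofNat, ht, hA]
      norm_num [Complex.conj_natCast]
    rw [hconj, hh_apply]
    ring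
  rw [Finset.sum_congr rfl fun i _ => expand i]
  have h1 : (∑ i, vc d i * (starRingEnd ℂ) (a i)) = A := (conj_sv a).symm
  have h2 : (∑ i, vc d i * b i) = B := rfl
  have h3 : (∑ i, vc d i * vc d i) = (sN d : ℂ) := sum_vc_sq
  simp only [Finset.sum_add_distrib, Finset.sum_sub_distrib, ← Finset.mul_sum, h1, h2, h3]
  have : t * A * (t * B * (sN d : ℂ)) = 2 * (t * A * B) := by
    rw [ht]
    field_simp
  rw [this]
  ring
/-! ### Support conditions and finiteness of bad parameter sets -/

/-- `a` has at least two nonzero coordinates. -/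
def TwoSupp (a : EuclideanSpace ℂ (Fin d)) : Prop :=
  ∃ i j : Fin d, i ≠ j ∧ a i ≠ 0 ∧ a j ≠ 0

lemma hh_single_apply (k i : Fin d) :
    hh (EuclideanSpace.single k (1 : ℂ)) i
      = (if i = k then 1 else 0) - 2 / (sN d : ℂ) * vc d k * vc d i := by
  rw [hh_apply, sv_single, EuclideanSpace.single_apply]
  ring_nf

lemma twoSupp_hh_single (hd : 2 ≤ d) (k : Fin d) :
    TwoSupp (hh (EuclideanSpace.single k (1 : ℂ))) := by
  have hd0 : 0 < d := by omega
  have hN := sN_cast_ne_zero hd0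
  have h2N : (2 : ℂ) / (sN d : ℂ) ≠ 0 := div_ne_zero two_ne_zero hN
  have hoff : ∀ i : Fin d, i ≠ k → hh (EuclideanSpace.single k (1 : ℂ)) i ≠ 0 := by
    intro i hik
    rw [hh_single_apply, if_neg hik, zero_sub, neg_ne_zero]
    exact mul_ne_zero (mul_ne_zero h2N (vc_ne_zero k)) (vc_ne_zero i)
  rcases Nat.lt_or_ge d 3 with h3 | h3
  · -- d = 2 : both coordinates are nonzero
    have hd2 : d = 2 := by omega
    subst hd2
    have hsN : sN 2 = 5 := by decide
    have hdiag : hh (EuclideanSpace.single k (1 : ℂ)) k ≠ 0 := by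
      rw [hh_single_apply, if_pos rfl, hsN]
      fin_cases k <;>
      · simp only [vc]
        norm_num
    fin_cases k
    · exact ⟨0, 1, by decide, hdiag, hoff 1 (by decide)⟩
    · exact ⟨0, 1, by decide, hoff 0 (by decide), hdiag⟩
  · -- d ≥ 3 : two off-diagonal coordinates
    obtain ⟨i, hi, j, hj, hij⟩ := Finset.one_lt_card.mp
      (by
        rw [Finset.card_erase_of_mem (Finset.mem_univ _), Finset.card_univ, Fintype.card_fin]
        omega : 1 < (Finset.univ.erase k).card)
    exact ⟨i, j, hij, hoff i (Finset.ne_of_mem_erase hi), hoff j (Finset.ne_of_mem_erase hj)⟩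

/-- Core finiteness: if `a` has two nonzero coordinates then only finitely many `z`
make `dzf z a` parallel to a fixed `b`. -/
lemma fin1 (a b : EuclideanSpace ℂ (Fin d)) (i j : Fin d) (hij : i ≠ j)
    (hai : a i ≠ 0) (haj : a j ≠ 0) :
    {z : ℂ | ∃ c : ℂ, c ≠ 0 ∧ dzf z a = c • b}.Finite := by
  have hijn : (i : ℕ) ≠ (j : ℕ) := fun h => hij (Fin.val_injective h)
  have key : ∀ (z : ℂ) (c : ℂ), dzf z a = c • b →
      (z ^ (i : ℕ) * a i = c * b i ∧ z ^ (j : ℕ) * a j = c * b j) := by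
    intro z c hz
    constructor
    · have := congrArg (· i) hz
      simpa [dzf, PiLp.smul_apply, smul_eq_mul] using this
    · have := congrArg (· j) hz
      simpa [dzf, PiLp.smul_apply, smul_eq_mul] using this
  have zero_of : ∀ (l : Fin d), a l ≠ 0 → b l = 0 → ∀ z ∈ {z : ℂ | ∃ c : ℂ, c ≠ 0 ∧ dzf z a = c • b}, z = 0 := by
    intro l hal hbl z hzmem
    obtain ⟨c, hc, hzc⟩ := hzmem
    have := congrArg (· l) hzc
    have h0 : z ^ (l : ℕ) * a l = c * b l := by
      simpa [dzf, PiLp.smul_apply, smul_eq_mul] using this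
    rw [hbl, mul_zero] at h0
    have hz0 : z ^ (l : ℕ) = 0 := by
      rcases mul_eq_zero.mp h0 with h | h
      · exact h
      · exact absurd h hal
    exact (pow_eq_zero_iff'.mp hz0).1
  by_cases hbi : b i = 0
  · exact (Set.finite_singleton 0).subset fun z hz => zero_of i hai hbi z hz
  by_cases hbj : b j = 0
  · exact (Set.finite_singleton 0).subset fun z hz => zero_of j haj hbj z hz
  · set p : Polynomial ℂ :=
      Polynomial.C (a i * b j) * Polynomial.X ^ (i : ℕ)
        - Polynomial.C (a j * b i) * Polynomial.X ^ (j : ℕ) with hp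
    have hpne : p ≠ 0 := by
      intro h0
      have := congrArg (fun q => Polynomial.coeff q (j : ℕ)) h0
      simp only [hp, Polynomial.coeff_sub, Polynomial.coeff_C_mul, Polynomial.coeff_X_pow,
        Polynomial.coeff_zero] at this
      rw [if_neg (Ne.symm hijn), if_pos trivial, mul_zero, mul_one, zero_sub, neg_eq_zero] at this
      exact absurd this (mul_ne_zero haj hbi)
    refine (Polynomial.finite_setOf_isRoot hpne).subset ?_
    rintro z ⟨c, hc, hzc⟩
    obtain ⟨h1, h2⟩ := key z c hzc
    show Polynomial.IsRoot p z
    simp only [hp, Polynomial.IsRoot.def, Polynomial.eval_sub, Polynomial.eval_mul,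
      Polynomial.eval_C, Polynomial.eval_pow, Polynomial.eval_X]
    linear_combination b j * h1 - b i * h2

lemma finA (a f : EuclideanSpace ℂ (Fin d)) (hf : TwoSupp f) :
    {w : ℂ | ∃ c : ℂ, c ≠ 0 ∧ dzf w a = c • f}.Finite := by
  by_cases ha : TwoSupp a
  · obtain ⟨i, j, hij, hai, haj⟩ := ha
    exact fin1 a f i j hij hai haj
  · convert Set.finite_empty
    rw [Set.eq_empty_iff_forall_notMem]
    rintro w ⟨c, hc, hw⟩
    obtain ⟨i, j, hij, hfi, hfj⟩ := hf
    refine ha ⟨i, j, hij, ?_, ?_⟩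
    · have := congrArg (· i) hw
      simp only [dzf, PiLp.toLp_apply, PiLp.smul_apply, smul_eq_mul] at this
      intro h0
      rw [h0, mul_zero] at this
      exact mul_ne_zero hc hfi this.symm
    · have := congrArg (· j) hw
      simp only [dzf, PiLp.toLp_apply, PiLp.smul_apply, smul_eq_mul] at this
      intro h0
      rw [h0, mul_zero] at this
      exact mul_ne_zero hc hfj this.symm

/-- For nonzero `a`, all but finitely many `w` make `hh (dzf w a)` have two
nonzero coordinates. -/
lemma finB (hd : 2 ≤ d) (a : EuclideanSpace ℂ (Fin d)) (ha : a ≠ 0) :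
    {w : ℂ | ¬ TwoSupp (hh (dzf w a))}.Finite := by
  have hd0 : 0 < d := by omega
  have hsub : {w : ℂ | ¬ TwoSupp (hh (dzf w a))} ⊆
      {0} ∪ ⋃ k : Fin d, {w : ℂ | ∃ c : ℂ, c ≠ 0 ∧
        dzf w a = c • hh (EuclideanSpace.single k (1 : ℂ))} := by
    intro w hw
    simp only [Set.mem_setOf_eq] at hw
    set y := hh (dzf w a) with hy
    by_cases hy0 : y = 0
    · left
      -- then dzf w a = 0, and since a ≠ 0 we get w = 0
      have hdz : dzf w a = 0 := by
        have h' := congrArg hh hy0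
        rw [hy, hh_hh hd0, hh_zero] at h'
        exact h'
      obtain ⟨l, hl⟩ : ∃ l, a l ≠ 0 := by
        by_contra hcon
        push_neg at hcon
        exact ha (PiLp.ext hcon)
      have h0 : w ^ (l : ℕ) * a l = 0 := congrArg (· l) hdz
      have : w ^ (l : ℕ) = 0 := by
        rcases mul_eq_zero.mp h0 with h | h
        · exact h
        · exact absurd h hl
      exact (pow_eq_zero_iff'.mp this).1
    · right
      obtain ⟨k, hk⟩ : ∃ k, y k ≠ 0 := by
        by_contra hcon
        push_neg at hcon
        exact hy0 (PiLp.ext hcon)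
      have hyk : y = y k • EuclideanSpace.single k (1 : ℂ) := by
        ext i
        by_cases hik : i = k
        · subst hik; simp [EuclideanSpace.single_apply]
        · simp only [PiLp.smul_apply, EuclideanSpace.single_apply, if_neg hik,
            smul_eq_mul, mul_zero]
          by_contra h0
          exact hw ⟨i, k, hik, h0, hk⟩
      refine Set.mem_iUnion.mpr ⟨k, y k, hk, ?_⟩
      have h' : dzf w a = hh y := by rw [hy, hh_hh hd0]
      rw [h']
      conv_lhs => rw [hyk]
      rw [hh_smul]
  refine Set.Finite.subset ?_ hsub
  exact (Set.finite_singleton 0).union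
    (Set.finite_iUnion fun k => finA a _ (twoSupp_hh_single hd k))

/-! ### The unit circle -/

/-- The unit circle as a set in `ℂ`. -/
def circS : Set ℂ := {z : ℂ | ‖z‖ = 1}

lemma circS_infinite : circS.Infinite := by
  have h1 : Infinite (Set.Ioc (-Real.pi) Real.pi) :=
    Set.Ioc.infinite (by linarith [Real.pi_pos])
  have h2 : Infinite Circle := Equiv.infinite_iff Circle.argEquiv |>.mpr h1
  exact Set.infinite_of_injective_forall_mem (f := fun z : Circle => (z : ℂ))
    Circle.coe_injective (fun z => Circle.norm_coe z)

lemma conj_mul_self_of_mem_circS {z : ℂ} (hz : z ∈ circS) : (starRingEnd ℂ) z * z = 1 := by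
  have : (Complex.normSq z : ℂ) = (starRingEnd ℂ) z * z := Complex.normSq_eq_conj_mul_self
  rw [← this, Complex.normSq_eq_norm_sq, hz]
  norm_num

lemma ne_zero_of_mem_circS {z : ℂ} (hz : z ∈ circS) : z ≠ 0 := by
  intro h
  rw [h] at hz
  simp [circS] at hz
/-! ### Small dimensions, restriction, and the combination theorem -/

theorem two_le_of_hasOR {V : Type*} [Fintype V] {G : SimpleGraph V} {d : ℕ}
    (hcard : 1 < Fintype.card V) (h : HasOR G d) : 2 ≤ d := by
  by_contra hlt
  push_neg at hlt
  obtain ⟨φ, hinj, hrk, -⟩ := h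
  obtain ⟨u, v, huv⟩ := Fintype.exists_pair_of_one_lt_card hcard
  interval_cases d
  · have h1 := hrk u
    have hle : finrank ℂ (φ u) ≤ finrank ℂ (EuclideanSpace ℂ (Fin 0)) := Submodule.finrank_le _
    rw [finrank_euclideanSpace_fin] at hle
    omega
  · have h1 : φ u = ⊤ := Submodule.eq_top_of_finrank_eq
      (by rw [hrk u, finrank_euclideanSpace_fin])
    have h2 : φ v = ⊤ := Submodule.eq_top_of_finrank_eq
      (by rw [hrk v, finrank_euclideanSpace_fin])
    exact huv (hinj (h1.trans h2.symm))

theorem hasOR_of_sum_left {V₁ V₂ : Type*} (G₁ : SimpleGraph V₁) (G₂ : SimpleGraph V₂) {d : ℕ}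
    (h : HasOR (G₁ ⊕g G₂) d) : HasOR G₁ d := by
  obtain ⟨φ, hinj, hrk, hadj⟩ := h
  exact ⟨φ ∘ Sum.inl, hinj.comp Sum.inl_injective, fun v => hrk _,
    fun u v huv => hadj _ _ (by simpa using huv)⟩

theorem hasOR_of_sum_right {V₁ V₂ : Type*} (G₁ : SimpleGraph V₁) (G₂ : SimpleGraph V₂) {d : ℕ}
    (h : HasOR (G₁ ⊕g G₂) d) : HasOR G₂ d := by
  obtain ⟨φ, hinj, hrk, hadj⟩ := h
  exact ⟨φ ∘ Sum.inr, hinj.comp Sum.inr_injective, fun v => hrk _,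
    fun u v huv => hadj _ _ (by simpa using huv)⟩

theorem hasOR_sum {V₁ V₂ : Type*} [Fintype V₁] [Fintype V₂]
    (G₁ : SimpleGraph V₁) (G₂ : SimpleGraph V₂) {d : ℕ} (hd : 2 ≤ d)
    (h1 : HasOR G₁ d) (h2 : HasOR G₂ d) : HasOR (G₁ ⊕g G₂) d := by
  have hd0 : 0 < d := by omega
  rw [hasOR_iff_vec] at h1 h2 ⊢
  obtain ⟨m, hm0, hmd, hmadj⟩ := h1
  obtain ⟨x, hx0, hxd, hxadj⟩ := h2
  -- choose the first circle parameter `w`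
  have hBad1 : (⋃ u : V₂, {w : ℂ | ¬ TwoSupp (hh (dzf w (x u)))}).Finite :=
    Set.finite_iUnion fun u => finB hd (x u) (hx0 u)
  obtain ⟨w, hw⟩ := (circS_infinite.diff hBad1).nonempty
  have hwz : (starRingEnd ℂ) w * w = 1 := conj_mul_self_of_mem_circS hw.1
  have hwne : w ≠ 0 := ne_zero_of_mem_circS hw.1
  set y : V₂ → EuclideanSpace ℂ (Fin d) := fun u => hh (dzf w (x u)) with hy
  have hts : ∀ u, TwoSupp (y u) := by
    intro u
    by_contra hcon
    exact hw.2 (Set.mem_iUnion.mpr ⟨u, hcon⟩)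
  -- choose the second circle parameter `z`
  have hBad2 : (⋃ (u : V₂) (v : V₁),
      {z : ℂ | ∃ c : ℂ, c ≠ 0 ∧ dzf z (y u) = c • m v}).Finite :=
    Set.finite_iUnion fun u => Set.finite_iUnion fun v => by
      obtain ⟨i, j, hij, hi, hj⟩ := hts u
      exact fin1 (y u) (m v) i j hij hi hj
  obtain ⟨z, hz⟩ := (circS_infinite.diff hBad2).nonempty
  have hzz : (starRingEnd ℂ) z * z = 1 := conj_mul_self_of_mem_circS hz.1
  have hzne : z ≠ 0 := ne_zero_of_mem_circS hz.1
  -- properties of the composite map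
  have hTin : ∀ u u' : V₂, ⟪dzf z (y u), dzf z (y u')⟫ = ⟪x u, x u'⟫ := by
    intro u u'
    rw [dzf_inner z hzz, hy]
    simp only
    rw [hh_inner hd0, dzf_inner w hwz]
  have hTnz : ∀ u : V₂, dzf z (y u) ≠ 0 := by
    intro u hcon
    have h0 : ⟪x u, x u⟫ = 0 := by rw [← hTin u u, hcon]; simp
    exact hx0 u (inner_self_eq_zero.mp h0)
  have hTinj : Function.Injective (dzf (d := d) z ∘ hh ∘ dzf w) :=
    ((dzf_injective hzne).comp (hh_injective hd0)).comp (dzf_injective hwne)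
  have hTsmul : ∀ (c : ℂ) (a : EuclideanSpace ℂ (Fin d)),
      dzf z (hh (dzf w (c • a))) = c • dzf z (hh (dzf w a)) := by
    intro c a
    rw [dzf_smul, hh_smul, dzf_smul]
  -- cross-distinctness from the choice of z
  have hcross : ∀ (u : V₂) (v : V₁),
      Submodule.span ℂ {dzf z (y u)} ≠ Submodule.span ℂ {m v} := by
    intro u v heq
    obtain ⟨c, hc⟩ := Submodule.span_singleton_eq_span_singleton.mp heq
    refine hz.2 (Set.mem_iUnion.mpr ⟨u, Set.mem_iUnion.mpr ⟨v,
      ⟨((c⁻¹ : ℂˣ) : ℂ), Units.ne_zero _, ?_⟩⟩⟩)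
    rw [← hc, ← Units.smul_def, inv_smul_smul]
  refine ⟨Sum.elim m (fun u => dzf z (y u)), ?_, ?_, ?_⟩
  · rintro (v | u)
    · exact hm0 v
    · exact hTnz u
  · rintro (a | a) (b | b) hab heq <;> simp only [Sum.elim_inl, Sum.elim_inr] at heq
    · exact hmd a b (fun h => hab (congrArg Sum.inl h)) heq
    · exact hcross b a heq.symm
    · exact hcross a b heq
    · refine hxd a b (fun h => hab (congrArg Sum.inr h)) ?_
      obtain ⟨c, hc⟩ := Submodule.span_singleton_eq_span_singleton.mp heq
      rw [Units.smul_def] at hc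
      have hc2 : dzf z (hh (dzf w ((c : ℂ) • x a))) = dzf z (hh (dzf w (x b))) := by
        rw [hTsmul]
        exact hc
      have := hTinj hc2
      exact Submodule.span_singleton_eq_span_singleton.mpr ⟨c, by rw [Units.smul_def]; exact this⟩
  · rintro (a | a) (b | b) hadj <;> simp only [Sum.elim_inl, Sum.elim_inr]
    · exact hmadj a b (by simpa using hadj)
    · simp at hadj
    · simp at hadj
    · rw [hTin a b]
      exact hxadj a b (by simpa using hadj)
end Stmt9Aux

/-- For finite nonempty simple graphs `G₁` and `G₂`, at least one of which has
more than one vertex, `ξ(G₁ ∪ G₂) = max (ξ(G₁), ξ(G₂))`. -/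
theorem stmt9 {V₁ V₂ : Type*} [Fintype V₁] [Fintype V₂] [Nonempty V₁] [Nonempty V₂]
    (G₁ : SimpleGraph V₁) (G₂ : SimpleGraph V₂)
    (h : 1 < Fintype.card V₁ ∨ 1 < Fintype.card V₂) :
    xi (G₁ ⊕g G₂) = max (xi G₁) (xi G₂) := by
  have hne1 : {n | HasOR G₁ n}.Nonempty := ⟨Fintype.card V₁, Stmt9Aux.hasOR_card G₁⟩
  have hne2 : {n | HasOR G₂ n}.Nonempty := ⟨Fintype.card V₂, Stmt9Aux.hasOR_card G₂⟩
  have hneS : {n | HasOR (G₁ ⊕g G₂) n}.Nonempty :=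
    ⟨Fintype.card (V₁ ⊕ V₂), Stmt9Aux.hasOR_card _⟩
  have h1mem : HasOR G₁ (xi G₁) := Nat.sInf_mem hne1
  have h2mem : HasOR G₂ (xi G₂) := Nat.sInf_mem hne2
  have hsmem : HasOR (G₁ ⊕g G₂) (xi (G₁ ⊕g G₂)) := Nat.sInf_mem hneS
  apply le_antisymm
  · have hd2 : 2 ≤ max (xi G₁) (xi G₂) := by
      rcases h with h | h
      · exact le_trans (Stmt9Aux.two_le_of_hasOR h h1mem) (le_max_left _ _)
      · exact le_trans (Stmt9Aux.two_le_of_hasOR h h2mem) (le_max_right _ _)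
    have hsum : HasOR (G₁ ⊕g G₂) (max (xi G₁) (xi G₂)) :=
      Stmt9Aux.hasOR_sum G₁ G₂ hd2
        (Stmt9Aux.hasOR_mono G₁ (le_max_left _ _) h1mem)
        (Stmt9Aux.hasOR_mono G₂ (le_max_right _ _) h2mem)
    exact Nat.sInf_le hsum
  · exact max_le (Nat.sInf_le (Stmt9Aux.hasOR_of_sum_left G₁ G₂ hsmem))
      (Nat.sInf_le (Stmt9Aux.hasOR_of_sum_right G₁ G₂ hsmem))
end

section
/- For finite nonempty simple graphs G₁ and G₂, the smallest dimension admitting an orthogonal representation of their join satisfies ξ(G₁ + G₂) = ξ(G₁) + ξ(G₂). -/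
open Module

section Helpers
open Submodule

variable {V : Type*} {E F : Type*} [NormedAddCommGroup E] [InnerProductSpace ℂ E]
  [NormedAddCommGroup F] [InnerProductSpace ℂ F]

local notation "⟪" x ", " y "⟫" => inner (𝕜 := ℂ) x y

/-- An orthogonal representation in an abstract inner product space. -/
def OrthRepIn (G : SimpleGraph V) (φ : V → Submodule ℂ E) : Prop :=
  Function.Injective φ ∧ (∀ v, Module.finrank ℂ (φ v) = 1) ∧
    ∀ u v : V, G.Adj u v → φ u ≤ (φ v)ᗮ

lemma ne_of_le_orth {p q : Submodule ℂ E} (h : p ≤ qᗮ) (hp : finrank ℂ p = 1) : p ≠ q := by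
  rintro rfl
  have : p = ⊥ := by
    have := p.inf_orthogonal_eq_bot
    rwa [inf_eq_left.mpr h] at this
  rw [this] at hp
  simp at hp

lemma le_orth_comm {p q : Submodule ℂ E} : p ≤ qᗮ ↔ q ≤ pᗮ := by
  constructor <;> intro h x hx <;> rw [Submodule.mem_orthogonal] <;> intro y hy
  · exact Submodule.inner_left_of_mem_orthogonal hx (h hy)
  · exact Submodule.inner_left_of_mem_orthogonal hx (h hy)

lemma OrthRepIn.map {G : SimpleGraph V} {φ : V → Submodule ℂ E} (f : E →ₗᵢ[ℂ] F)
    (h : OrthRepIn G φ) : OrthRepIn G (fun v => (φ v).map f.toLinearMap) := by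
  obtain ⟨hinj, hrk, horth⟩ := h
  refine ⟨fun u v huv => hinj (Submodule.map_injective_of_injective f.injective huv),
    fun v => ?_, fun u v hadj => ?_⟩
  · rw [← (Submodule.equivMapOfInjective f.toLinearMap f.injective (φ v)).finrank_eq]
    exact hrk v
  · rintro _ ⟨a, ha, rfl⟩
    rw [Submodule.mem_orthogonal]
    rintro _ ⟨b, hb, rfl⟩
    rw [LinearIsometry.coe_toLinearMap] at *
    rw [f.inner_map_map]
    exact Submodule.inner_right_of_mem_orthogonal hb (horth u v hadj ha)

lemma OrthRepIn.comap {G : SimpleGraph V} {φ : V → Submodule ℂ E} {U : Submodule ℂ E}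
    (hU : ∀ v, φ v ≤ U) (h : OrthRepIn G φ) :
    OrthRepIn G (fun v => (φ v).comap U.subtype) := by
  obtain ⟨hinj, hrk, horth⟩ := h
  refine ⟨fun u v huv => ?_, fun v => ?_, fun u v hadj x hx => ?_⟩
  · apply hinj
    have := congrArg (Submodule.map U.subtype) huv
    rwa [Submodule.map_comap_subtype, Submodule.map_comap_subtype,
      inf_eq_right.mpr (hU u), inf_eq_right.mpr (hU v)] at this
  · rw [(Submodule.comapSubtypeEquivOfLe (hU v)).finrank_eq]
    exact hrk v
  · rw [Submodule.mem_orthogonal]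
    intro y hy
    have : (⟪(y : E), (x : E)⟫) = 0 :=
      Submodule.inner_right_of_mem_orthogonal hy (horth u v hadj hx)
    exact this

lemma hasOR_iff_orthRepIn (G : SimpleGraph V) [FiniteDimensional ℂ E] :
    HasOR G (finrank ℂ E) ↔ ∃ φ : V → Submodule ℂ E, OrthRepIn G φ := by
  constructor
  · rintro ⟨φ, hφ⟩
    exact ⟨_, OrthRepIn.map (stdOrthonormalBasis ℂ E).repr.symm.toLinearIsometry hφ⟩
  · rintro ⟨φ, hφ⟩
    exact ⟨_, OrthRepIn.map (stdOrthonormalBasis ℂ E).repr.toLinearIsometry hφ⟩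

lemma hasOR_of_le {G : SimpleGraph V} [FiniteDimensional ℂ E] {φ : V → Submodule ℂ E}
    (U : Submodule ℂ E) (hU : ∀ v, φ v ≤ U) (h : OrthRepIn G φ) :
    HasOR G (finrank ℂ U) :=
  (hasOR_iff_orthRepIn (E := U) G).2 ⟨_, h.comap hU⟩

lemma span_single_le_orth {ι : Type*} [Fintype ι] {x y : EuclideanSpace ℂ ι} (h : ⟪x, y⟫ = 0) :
    (ℂ ∙ x) ≤ (ℂ ∙ y)ᗮ := by
  rw [Submodule.span_singleton_le_iff_mem, Submodule.mem_orthogonal_singleton_iff_inner_left]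
  exact h


-- nonemptiness
lemma hasOR_card {V : Type*} [Fintype V] (G : SimpleGraph V) : HasOR G (Fintype.card V) := by
  classical
  let e := Fintype.equivFin V
  have hne : ∀ v : V, (EuclideanSpace.single (e v) (1:ℂ) : EuclideanSpace ℂ (Fin (Fintype.card V))) ≠ 0 := by
    intro v h
    have := congrFun (congrArg (fun f => (WithLp.ofLp f : Fin (Fintype.card V) → ℂ)) h) (e v)
    simp [EuclideanSpace.single_apply] at this
  have hinner : ∀ u v : V, u ≠ v →
      ⟪(EuclideanSpace.single (e u) (1:ℂ) : EuclideanSpace ℂ (Fin (Fintype.card V))),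
        EuclideanSpace.single (e v) (1:ℂ)⟫ = 0 := by
    intro u v huv
    rw [EuclideanSpace.inner_single_left]
    simp [EuclideanSpace.single_apply, huv]
  refine ⟨fun v => ℂ ∙ (EuclideanSpace.single (e v) (1:ℂ)), fun u v huv => ?_, fun v => ?_, fun u v hadj => ?_⟩
  · by_contra hne'
    exact ne_of_le_orth (span_single_le_orth (hinner u v hne'))
      (finrank_span_singleton (hne u)) huv
  · exact finrank_span_singleton (hne v)
  · exact span_single_le_orth (hinner u v (G.ne_of_adj hadj))

noncomputable def sumInlIso (d₁ d₂ : ℕ) :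
    EuclideanSpace ℂ (Fin d₁) →ₗᵢ[ℂ] EuclideanSpace ℂ (Fin d₁ ⊕ Fin d₂) :=
  LinearMap.isometryOfInner
    { toFun := fun x => WithLp.toLp 2 (Sum.elim (WithLp.ofLp x) 0)
      map_add' := fun x y => by ext i; cases i <;> simp [PiLp.add_apply]
      map_smul' := fun c x => by ext i; cases i <;> simp [PiLp.smul_apply] }
    (by
      intro x y
      simp [PiLp.inner_apply, Fintype.sum_sum_type])

noncomputable def sumInrIso (d₁ d₂ : ℕ) :
    EuclideanSpace ℂ (Fin d₂) →ₗᵢ[ℂ] EuclideanSpace ℂ (Fin d₁ ⊕ Fin d₂) :=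
  LinearMap.isometryOfInner
    { toFun := fun x => WithLp.toLp 2 (Sum.elim (0 : Fin d₁ → ℂ) (WithLp.ofLp x))
      map_add' := fun x y => by ext i; cases i <;> simp [PiLp.add_apply]
      map_smul' := fun c x => by ext i; cases i <;> simp [PiLp.smul_apply] }
    (by
      intro x y
      simp [PiLp.inner_apply, Fintype.sum_sum_type])

lemma inner_inl_inr {d₁ d₂ : ℕ} (x : EuclideanSpace ℂ (Fin d₁)) (y : EuclideanSpace ℂ (Fin d₂)) :
    ⟪(sumInlIso d₁ d₂ x : EuclideanSpace ℂ (Fin d₁ ⊕ Fin d₂)), sumInrIso d₁ d₂ y⟫ = 0 := by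
  have h1 : ∀ i, sumInlIso d₁ d₂ x i = Sum.elim x 0 i := fun _ => rfl
  have h2 : ∀ i, sumInrIso d₁ d₂ y i = Sum.elim (0 : Fin d₁ → ℂ) y i := fun _ => rfl
  simp [PiLp.inner_apply, Fintype.sum_sum_type, h1, h2]

lemma orthRepIn_join {V₁ V₂ : Type*} {G₁ : SimpleGraph V₁} {G₂ : SimpleGraph V₂} {d₁ d₂ : ℕ}
    {φ₁ : V₁ → Submodule ℂ (EuclideanSpace ℂ (Fin d₁))}
    {φ₂ : V₂ → Submodule ℂ (EuclideanSpace ℂ (Fin d₂))}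
    (h₁ : OrthRepIn G₁ φ₁) (h₂ : OrthRepIn G₂ φ₂) :
    ∃ Φ : V₁ ⊕ V₂ → Submodule ℂ (EuclideanSpace ℂ (Fin d₁ ⊕ Fin d₂)),
      OrthRepIn (graphJoin G₁ G₂) Φ := by
  have hψ₁ := h₁.map (sumInlIso d₁ d₂)
  have hψ₂ := h₂.map (sumInrIso d₁ d₂)
  set ψ₁ : V₁ → Submodule ℂ (EuclideanSpace ℂ (Fin d₁ ⊕ Fin d₂)) :=
    fun v => (φ₁ v).map (sumInlIso d₁ d₂).toLinearMap with hψ₁def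
  set ψ₂ : V₂ → Submodule ℂ (EuclideanSpace ℂ (Fin d₁ ⊕ Fin d₂)) :=
    fun v => (φ₂ v).map (sumInrIso d₁ d₂).toLinearMap with hψ₂def
  have hcross : ∀ (u : V₁) (v : V₂), ψ₁ u ≤ (ψ₂ v)ᗮ := by
    rintro u v _ ⟨a, _, rfl⟩
    rw [Submodule.mem_orthogonal]
    rintro _ ⟨b, _, rfl⟩
    rw [inner_eq_zero_symm]
    exact inner_inl_inr a b
  refine ⟨Sum.elim ψ₁ ψ₂, fun u v huv => ?_, fun v => ?_, fun u v hadj => ?_⟩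
  · cases u <;> cases v <;> simp only [Sum.elim_inl, Sum.elim_inr] at huv
    · exact congrArg Sum.inl (hψ₁.1 huv)
    · exact absurd huv (ne_of_le_orth (hcross _ _) (hψ₁.2.1 _))
    · exact absurd huv.symm (ne_of_le_orth (hcross _ _) (hψ₁.2.1 _))
    · exact congrArg Sum.inr (hψ₂.1 huv)
  · cases v
    · exact hψ₁.2.1 _
    · exact hψ₂.2.1 _
  · cases u <;> cases v <;>
      simp only [graphJoin, SimpleGraph.sup_adj, SimpleGraph.sum_adj,
        completeBipartiteGraph_adj, Sum.isLeft_inl, Sum.isRight_inl, Sum.isLeft_inr,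
        Sum.isRight_inr, Sum.elim_inl, Sum.elim_inr] at hadj ⊢
    · exact hψ₁.2.2 _ _ (by tauto)
    · exact hcross _ _
    · exact le_orth_comm.mp (hcross _ _)
    · exact hψ₂.2.2 _ _ (by tauto)

lemma isOrthRep_iff_orthRepIn {V : Type*} (G : SimpleGraph V) (d : ℕ)
    (φ : V → Submodule ℂ (EuclideanSpace ℂ (Fin d))) :
    IsOrthRep G d φ ↔ OrthRepIn G φ := Iff.rfl

lemma join_hasOR {V₁ V₂ : Type*} {G₁ : SimpleGraph V₁} {G₂ : SimpleGraph V₂} {d₁ d₂ : ℕ}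
    (h₁ : HasOR G₁ d₁) (h₂ : HasOR G₂ d₂) : HasOR (graphJoin G₁ G₂) (d₁ + d₂) := by
  obtain ⟨φ₁, hφ₁⟩ := h₁
  obtain ⟨φ₂, hφ₂⟩ := h₂
  rw [isOrthRep_iff_orthRepIn] at hφ₁ hφ₂
  obtain ⟨Φ, hΦ⟩ := orthRepIn_join hφ₁ hφ₂
  have hfr : finrank ℂ (EuclideanSpace ℂ (Fin d₁ ⊕ Fin d₂)) = d₁ + d₂ := by
    simp [finrank_euclideanSpace]
  have h := (hasOR_iff_orthRepIn (E := EuclideanSpace ℂ (Fin d₁ ⊕ Fin d₂))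
    (graphJoin G₁ G₂)).2 ⟨Φ, hΦ⟩
  rwa [hfr] at h

lemma join_lower {V₁ V₂ : Type*} {G₁ : SimpleGraph V₁} {G₂ : SimpleGraph V₂} {d : ℕ}
    (h : HasOR (graphJoin G₁ G₂) d) :
    ∃ a b : ℕ, HasOR G₁ a ∧ HasOR G₂ b ∧ a + b = d := by
  obtain ⟨Φ, hΦ⟩ := h
  rw [isOrthRep_iff_orthRepIn] at hΦ
  obtain ⟨W, hW⟩ : ∃ W : Submodule ℂ (EuclideanSpace ℂ (Fin d)),
      W = ⨆ v : V₂, Φ (Sum.inr v) := ⟨_, rfl⟩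
  have hinr : ∀ v : V₂, Φ (Sum.inr v) ≤ W := fun v => by
    rw [hW]; exact le_iSup (fun v => Φ (Sum.inr v)) v
  have hinl : ∀ u : V₁, Φ (Sum.inl u) ≤ Wᗮ := by
    intro u
    rw [le_orth_comm, hW]
    exact iSup_le fun v => hΦ.2.2 _ _ (by simp [graphJoin])
  have h2 : OrthRepIn G₂ (fun v => Φ (Sum.inr v)) :=
    ⟨fun a b hab => Sum.inr_injective (hΦ.1 hab), fun v => hΦ.2.1 _,
      fun a b hadj => hΦ.2.2 _ _ (by simp [graphJoin, hadj])⟩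
  have h1 : OrthRepIn G₁ (fun u => Φ (Sum.inl u)) :=
    ⟨fun a b hab => Sum.inl_injective (hΦ.1 hab), fun v => hΦ.2.1 _,
      fun a b hadj => hΦ.2.2 _ _ (by simp [graphJoin, hadj])⟩
  refine ⟨finrank ℂ Wᗮ, finrank ℂ W, ?_, ?_, ?_⟩
  · exact hasOR_of_le Wᗮ hinl h1
  · exact hasOR_of_le W hinr h2
  · rw [add_comm, Submodule.finrank_add_finrank_orthogonal, finrank_euclideanSpace_fin]


end Helpers

/-- For finite nonempty simple graphs `G₁` and `G₂`,
`ξ(G₁ + G₂) = ξ(G₁) + ξ(G₂)`. -/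
theorem stmt10 {V₁ V₂ : Type*} [Fintype V₁] [Fintype V₂] [Nonempty V₁] [Nonempty V₂]
    (G₁ : SimpleGraph V₁) (G₂ : SimpleGraph V₂) :
    xi (graphJoin G₁ G₂) = xi G₁ + xi G₂ := by
  have hne1 : {d | HasOR G₁ d}.Nonempty := ⟨_, hasOR_card G₁⟩
  have hne2 : {d | HasOR G₂ d}.Nonempty := ⟨_, hasOR_card G₂⟩
  have hor1 : HasOR G₁ (xi G₁) := Nat.sInf_mem hne1
  have hor2 : HasOR G₂ (xi G₂) := Nat.sInf_mem hne2
  have hup : HasOR (graphJoin G₁ G₂) (xi G₁ + xi G₂) := join_hasOR hor1 hor2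
  refine le_antisymm (Nat.sInf_le hup) (le_csInf ⟨_, hup⟩ ?_)
  rintro d hd
  obtain ⟨a, b, ha, hb, rfl⟩ := join_lower hd
  exact add_le_add (Nat.sInf_le ha) (Nat.sInf_le hb)
end

section
/- For all natural numbers n and m with n + m ≥ 1, the graph n·K̄₂ + m·K₁ (the join of n copies of the two-vertex edgeless graph and m copies of the one-vertex graph) satisfies ξ(n·K̄₂ + m·K₁) = 2n + m. -/
open Module

/-- The join `n·K̄₂ + m·K₁` of `n` copies of the two-vertex edgeless graph `K̄₂` and `m` copies
of the one-vertex graph `K₁`: the complete multipartite graph whose parts are the `n` copies of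
`K̄₂` (the fibers `{(i, 0), (i, 1)}`) and the `m` singletons. Two vertices are adjacent if and
only if they lie in different parts. -/
def multiJoin (n m : ℕ) : SimpleGraph ((Fin n × Fin 2) ⊕ Fin m) :=
  (⊤ : SimpleGraph (Fin n ⊕ Fin m)).comap (Sum.map Prod.fst id)

section Helpers


variable {E : Type*} [NormedAddCommGroup E] [InnerProductSpace ℂ E]

lemma orth_symm {A B : Submodule ℂ E} (h : A ≤ Bᗮ) : B ≤ Aᗮ := by
  intro b hb
  rw [Submodule.mem_orthogonal]
  intro a ha
  exact inner_eq_zero_symm.mp ((Submodule.mem_orthogonal _ _).mp (h ha) b hb)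

lemma inf_eq_bot_of_orth {A B : Submodule ℂ E} (h : A ≤ Bᗮ) : A ⊓ B = ⊥ := by
  rw [eq_bot_iff]
  intro x hx
  have h1 := (Submodule.mem_orthogonal _ _).mp (h hx.1) x hx.2
  rw [Submodule.mem_bot]
  exact inner_self_eq_zero.mp h1

variable [FiniteDimensional ℂ E]

lemma rank_sup_of_inf_bot {A B : Submodule ℂ E} (hd : A ⊓ B = ⊥) :
    finrank ℂ ↥(A ⊔ B) = finrank ℂ A + finrank ℂ B := by
  have := Submodule.finrank_sup_add_finrank_inf_eq A B
  rw [hd, finrank_bot] at this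
  omega

lemma finrank_finset_sup {ι : Type*} [DecidableEq ι] (s : Finset ι)
    (W : ι → Submodule ℂ E)
    (horth : ∀ p ∈ s, ∀ q ∈ s, p ≠ q → W p ≤ (W q)ᗮ) :
    finrank ℂ ↥(s.sup W) = ∑ p ∈ s, finrank ℂ ↥(W p) := by
  induction s using Finset.cons_induction with
  | empty => simp
  | cons a s ha ih =>
    rw [Finset.sup_cons, Finset.sum_cons]
    have h1 : s.sup W ≤ (W a)ᗮ := Finset.sup_le fun b hb =>
      horth b (Finset.mem_cons_of_mem hb) a (Finset.mem_cons_self a s)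
        (by rintro rfl; exact ha hb)
    rw [rank_sup_of_inf_bot (inf_eq_bot_of_orth (orth_symm h1))]
    rw [ih fun p hp q hq hpq =>
      horth p (Finset.mem_cons_of_mem hp) q (Finset.mem_cons_of_mem hq) hpq]

end Helpers

lemma multiJoin_hasOR (n m : ℕ) : HasOR (multiJoin n m) (2*n+m) := by
  classical
  let f : (Fin n × Fin 2) ⊕ Fin m → Fin (2*n+m) :=
    Sum.elim (fun p => ⟨2 * p.1.val + p.2.val, by have := p.1.isLt; have := p.2.isLt; omega⟩)
             (fun k => ⟨2*n + k.val, by have := k.isLt; omega⟩)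
  have hf : Function.Injective f := by
    rintro (⟨a,b⟩|k) (⟨c,e⟩|l) hxy <;>
      simp only [f, Sum.elim_inl, Sum.elim_inr, Fin.mk.injEq] at hxy
    · have hb := b.isLt; have he := e.isLt
      have h1 : a.val = c.val ∧ b.val = e.val := by omega
      simp only [Sum.inl.injEq, Prod.mk.injEq]
      exact ⟨Fin.ext h1.1, Fin.ext h1.2⟩
    · have := a.isLt; have := b.isLt; omega
    · have := c.isLt; have := e.isLt; omega
    · simp only [Sum.inr.injEq]; exact Fin.ext (by omega)
  refine ⟨fun x => ℂ ∙ (EuclideanSpace.single (f x) (1:ℂ)), ?_, ?_, ?_⟩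
  · intro x y hxy
    by_cases hfe : f x = f y
    · exact hf hfe
    · exfalso
      have hmem : EuclideanSpace.single (f x) (1:ℂ) ∈
          (ℂ ∙ (EuclideanSpace.single (f y) (1:ℂ))) := by
        rw [← show (Submodule.span ℂ {EuclideanSpace.single (f x) (1:ℂ)}) =
            Submodule.span ℂ {EuclideanSpace.single (f y) (1:ℂ)} from hxy]
        exact Submodule.mem_span_singleton_self _
      obtain ⟨c, hc⟩ := Submodule.mem_span_singleton.mp hmem
      have := congrArg (fun w : EuclideanSpace ℂ (Fin (2*n+m)) => w (f x)) hc
      simp [EuclideanSpace.single_apply, hfe, Ne.symm hfe] at this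
  · intro x
    apply finrank_span_singleton
    intro h0
    have := congrArg (fun w : EuclideanSpace ℂ (Fin (2*n+m)) => w (f x)) h0
    simp [EuclideanSpace.single_apply] at this
  · intro u v huv
    simp only [multiJoin, SimpleGraph.comap_adj, SimpleGraph.top_adj] at huv
    have hfu : f u ≠ f v := fun h => huv (by rw [show u = v from hf h])
    rw [Submodule.span_singleton_le_iff_mem, Submodule.mem_orthogonal]
    intro w hw
    obtain ⟨c, rfl⟩ := Submodule.mem_span_singleton.mp hw
    rw [inner_smul_left, EuclideanSpace.inner_single_left,
      EuclideanSpace.single_apply]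
    simp [Ne.symm hfu]

lemma multiJoin_lb (n m d : ℕ) (h : HasOR (multiJoin n m) d) : 2*n+m ≤ d := by
  classical
  obtain ⟨φ, hinj, hrk, horth⟩ := h
  have hadj : ∀ u v, Sum.map Prod.fst id u ≠ Sum.map Prod.fst id v → φ u ≤ (φ v)ᗮ := by
    intro u v huv
    exact horth u v
      (by simpa only [multiJoin, SimpleGraph.comap_adj, SimpleGraph.top_adj] using huv)
  let W : Fin n ⊕ Fin m → Submodule ℂ (EuclideanSpace ℂ (Fin d)) :=
    Sum.elim (fun i => φ (Sum.inl (i, 0)) ⊔ φ (Sum.inl (i, 1))) (fun k => φ (Sum.inr k))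
  have hWorth : ∀ p q, p ≠ q → W p ≤ (W q)ᗮ := by
    rintro (i|k) (j|l) hpq <;> simp only [W, Sum.elim_inl, Sum.elim_inr]
    · have hij : i ≠ j := fun hh => hpq (by rw [hh])
      rw [← Submodule.inf_orthogonal]
      refine sup_le (le_inf ?_ ?_) (le_inf ?_ ?_) <;> exact hadj _ _ (by simp [hij])
    · exact sup_le (hadj _ _ (by simp)) (hadj _ _ (by simp))
    · rw [← Submodule.inf_orthogonal]
      exact le_inf (hadj _ _ (by simp)) (hadj _ _ (by simp))
    · have hkl : k ≠ l := fun hh => hpq (by rw [hh])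
      exact hadj _ _ (by simp [hkl])
  have hW2 : ∀ i : Fin n, finrank ℂ (W (Sum.inl i)) = 2 := by
    intro i
    have hAB : φ (Sum.inl (i, 0)) ≠ φ (Sum.inl (i, 1)) := by
      intro he
      have := hinj he
      simp at this
    have hinf : φ (Sum.inl (i, 0)) ⊓ φ (Sum.inl (i, 1)) = ⊥ := by
      by_contra hne
      have hle : φ (Sum.inl (i,0)) ⊓ φ (Sum.inl (i,1)) ≤ φ (Sum.inl (i,0)) := inf_le_left
      have h1 : finrank ℂ ↥(φ (Sum.inl (i,0)) ⊓ φ (Sum.inl (i,1))) = 1 := by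
        have hle1 : finrank ℂ ↥(φ (Sum.inl (i,0)) ⊓ φ (Sum.inl (i,1))) ≤ 1 := by
          have h2 := Submodule.finrank_mono hle
          rwa [hrk] at h2
        have hne0 : finrank ℂ ↥(φ (Sum.inl (i,0)) ⊓ φ (Sum.inl (i,1))) ≠ 0 :=
          fun h0 => hne (Submodule.finrank_eq_zero.mp h0)
        omega
      have heq1 := Submodule.eq_of_le_of_finrank_eq hle (by rw [h1, hrk])
      have hle2 : φ (Sum.inl (i,0)) ≤ φ (Sum.inl (i,1)) := heq1 ▸ inf_le_right
      exact hAB (Submodule.eq_of_le_of_finrank_eq hle2 (by rw [hrk, hrk]))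
    show finrank ℂ ↥(φ (Sum.inl (i,0)) ⊔ φ (Sum.inl (i,1))) = 2
    rw [rank_sup_of_inf_bot hinf, hrk, hrk]
  have hsum := finrank_finset_sup Finset.univ W (fun p _ q _ hpq => hWorth p q hpq)
  have hfin : finrank ℂ ↥(Finset.univ.sup W) ≤ d := by
    have := Submodule.finrank_le (Finset.univ.sup W)
    rwa [finrank_euclideanSpace_fin] at this
  rw [hsum] at hfin
  have htot : ∑ p : Fin n ⊕ Fin m, finrank ℂ (W p) = 2*n+m := by
    rw [Fintype.sum_sum_type]
    have : ∀ k : Fin m, finrank ℂ (W (Sum.inr k)) = 1 := fun k => hrk _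
    simp only [hW2, this, Finset.sum_const, Finset.card_univ, Fintype.card_fin, smul_eq_mul]
    omega
  omega

/-- For all natural numbers `n` and `m` with `n + m ≥ 1`,
`ξ(n·K̄₂ + m·K₁) = 2n + m`. -/
theorem stmt11 (n m : ℕ) (h : 1 ≤ n + m) : xi (multiJoin n m) = 2 * n + m := by
  have hub : HasOR (multiJoin n m) (2 * n + m) := multiJoin_hasOR n m
  exact le_antisymm (Nat.sInf_le hub)
    (le_csInf ⟨_, hub⟩ fun d hd => multiJoin_lb n m d hd)
end

section
/- If the graph n·K̄₂ + m·K₁ is a subgraph of a finite simple graph G, then Ξ(G) ≥ 2n + m; that is, any faithful orthogonal representation of G requires dimension at least 2n + m. -/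
open Module

section FORexist
variable {V : Type*} [Fintype V]

lemma exists_FOR (G : SimpleGraph V) : ∃ d, HasFOR G d := by
  classical
  set ι := V ⊕ Sym2 V with hι
  set d := Fintype.card ι with hd
  set e : ι ≃ Fin d := Fintype.equivFin ι with he
  set g : V → ι → ℂ := fun v => Sum.elim (fun u => if u = v then 1 else 0)
    (fun s => if v ∈ s ∧ ¬s.IsDiag ∧ s ∉ G.edgeSet then 1 else 0) with hg
  set x : V → EuclideanSpace ℂ (Fin d) := fun v => WithLp.toLp 2 (fun k => g v (e.symm k)) with hx
  have hx0 : ∀ v, x v ≠ 0 := by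
    intro v h
    have := congrArg (fun w : EuclideanSpace ℂ (Fin d) => w (e (Sum.inl v))) h
    simp [hx, hg] at this
  have hinner : ∀ u v : V, u ≠ v →
      (inner ℂ (x u) (x v) : ℂ) = if G.Adj u v then 0 else 1 := by
    intro u v huv
    rw [PiLp.inner_apply]
    have : ∀ k : Fin d, (inner ℂ (x u k) (x v k) : ℂ)
        = (starRingEnd ℂ) (g u (e.symm k)) * g v (e.symm k) := by
      intro k; rw [RCLike.inner_apply, mul_comm]
    simp_rw [this]
    rw [Equiv.sum_comp e.symm (fun i => (starRingEnd ℂ) (g u i) * g v i)]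
    rw [Fintype.sum_sum_type]
    have h1 : ∑ w : V, (starRingEnd ℂ) (g u (Sum.inl w)) * g v (Sum.inl w) = 0 := by
      apply Finset.sum_eq_zero
      intro w _
      simp only [hg, Sum.elim_inl]
      by_cases h : w = u
      · subst h; simp [huv]
      · simp [h]
    have h2 : ∑ s : Sym2 V, (starRingEnd ℂ) (g u (Sum.inr s)) * g v (Sum.inr s)
        = if G.Adj u v then 0 else 1 := by
      rw [Finset.sum_eq_single (s(u, v))]
      · simp only [hg, Sum.elim_inr]
        by_cases hA : G.Adj u v
        · simp [hA]
        · simp [hA, huv, Sym2.isDiag_iff_proj_eq]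
      · intro s _ hs
        simp only [hg, Sum.elim_inr]
        by_cases hc : u ∈ s ∧ ¬s.IsDiag ∧ s ∉ G.edgeSet
        · by_cases hc' : v ∈ s ∧ ¬s.IsDiag ∧ s ∉ G.edgeSet
          · exact absurd ((Sym2.mem_and_mem_iff huv).mp ⟨hc.1, hc'.1⟩) hs
          · simp [hc']
        · simp [hc]
      · intro h; exact absurd (Finset.mem_univ _) h
    rw [h1, h2, zero_add]
  refine ⟨d, fun v => ℂ ∙ (x v), ?_, ?_, ?_⟩
  · intro u v h
    by_contra huv
    have h' : Submodule.span ℂ {x u} = Submodule.span ℂ {x v} := h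
    have : x u ∈ (ℂ ∙ x v) := by rw [← h']; exact Submodule.mem_span_singleton_self _
    obtain ⟨c, hc⟩ := Submodule.mem_span_singleton.mp this
    have := congrArg (fun w : EuclideanSpace ℂ (Fin d) => w (e (Sum.inl u))) hc.symm
    simp [hx, hg, huv] at this
  · intro v; exact finrank_span_singleton (hx0 v)
  · intro u v huv
    rw [Submodule.span_singleton_le_iff_mem,
      Submodule.mem_orthogonal_singleton_iff_inner_left, hinner u v huv]
    by_cases hA : G.Adj u v <;> simp [hA]
end FORexist

lemma rank2_of_ne {d : ℕ} (A B : Submodule ℂ (EuclideanSpace ℂ (Fin d)))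
    (hA : finrank ℂ A = 1) (hB : finrank ℂ B = 1) (hAB : A ≠ B) :
    finrank ℂ ↥(A ⊔ B) = 2 := by
  have h0 : finrank ℂ ↥(A ⊓ B) = 0 := by
    by_contra h
    have h1 : 1 ≤ finrank ℂ ↥(A ⊓ B) := Nat.pos_of_ne_zero h
    have e1 : A ⊓ B = A := Submodule.eq_of_le_of_finrank_le inf_le_left (hA ▸ h1)
    have e2 : A ⊓ B = B := Submodule.eq_of_le_of_finrank_le inf_le_right (hB ▸ h1)
    exact hAB (e1 ▸ e2)
  have := Submodule.finrank_sup_add_finrank_inf_eq A B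
  omega

open DirectSum in
lemma key_bound {V : Type*} [Fintype V] (G : SimpleGraph V) (n m : ℕ)
    (f : (Fin n × Fin 2) ⊕ Fin m → V) (hf : Function.Injective f)
    (hadj : ∀ u v, (multiJoin n m).Adj u v → G.Adj (f u) (f v)) :
    ∀ d : ℕ, HasFOR G d → 2 * n + m ≤ d := by
  classical
  rintro d ⟨φ, hinj, hrk, hfa⟩
  -- orthogonality across parts
  have hLo : ∀ u v : (Fin n × Fin 2) ⊕ Fin m,
      Sum.map Prod.fst id u ≠ Sum.map Prod.fst id v → Submodule.IsOrtho (φ (f u)) (φ (f v)) := by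
    intro u v h
    have ha : (multiJoin n m).Adj u v := by
      simp only [multiJoin, SimpleGraph.comap_adj, SimpleGraph.top_adj]
      exact h
    have hG := hadj u v ha
    exact (hfa (f u) (f v) hG.ne).mp hG
  set P : Fin n ⊕ Fin m → Submodule ℂ (EuclideanSpace ℂ (Fin d)) :=
    Sum.elim (fun i => φ (f (Sum.inl (i, 0))) ⊔ φ (f (Sum.inl (i, 1))))
      (fun j => φ (f (Sum.inr j))) with hP
  have hPo : ∀ a b, a ≠ b → Submodule.IsOrtho (P a) (P b) := by
    rintro (i | j) (i' | j') hab
    · have h1 : i ≠ i' := fun h => hab (by rw [h])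
      refine Submodule.isOrtho_sup_left.mpr ⟨?_, ?_⟩ <;>
        refine Submodule.isOrtho_sup_right.mpr ⟨?_, ?_⟩ <;>
        exact hLo _ _ (by simp [h1])
    · refine Submodule.isOrtho_sup_left.mpr ⟨?_, ?_⟩ <;> exact hLo _ _ (by simp)
    · refine Submodule.isOrtho_sup_right.mpr ⟨?_, ?_⟩ <;> exact hLo _ _ (by simp)
    · have h1 : j ≠ j' := fun h => hab (by rw [h])
      exact hLo _ _ (by simp [h1])
  have hind : iSupIndep P := by
    rw [iSupIndep_def]
    intro a
    refine Submodule.IsOrtho.disjoint ?_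
    rw [Submodule.isOrtho_iSup_right]
    intro b
    rw [Submodule.isOrtho_iSup_right]
    intro hba
    exact (hPo b a hba).symm
  have hfr : ∀ a, finrank ℂ (P a) = Sum.elim (fun _ : Fin n => 2) (fun _ : Fin m => 1) a := by
    rintro (i | j)
    · refine rank2_of_ne _ _ (hrk _) (hrk _) ?_
      intro h
      have := hf (hinj h)
      simp at this
    · exact hrk _
  have hle : finrank ℂ (⨁ a, ↥(P a)) ≤ finrank ℂ (EuclideanSpace ℂ (Fin d)) :=
    LinearMap.finrank_le_finrank_of_injective hind.dfinsupp_lsum_injective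
  rw [finrank_directSum] at hle
  rw [finrank_euclideanSpace, Fintype.card_fin] at hle
  calc 2 * n + m = ∑ a : Fin n ⊕ Fin m, finrank ℂ (P a) := by
        rw [Fintype.sum_sum_type]
        simp [hfr, mul_comm]
    _ ≤ d := hle

/-- If the graph `n·K̄₂ + m·K₁` is a subgraph of a finite simple graph `G`, then
`Ξ(G) ≥ 2n + m`; that is, any faithful orthogonal representation of `G` requires dimension at
least `2n + m`. -/
theorem stmt13 {V : Type*} [Fintype V] (G : SimpleGraph V) (n m : ℕ)
    (f : (Fin n × Fin 2) ⊕ Fin m → V) (hf : Function.Injective f)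
    (hadj : ∀ u v, (multiJoin n m).Adj u v → G.Adj (f u) (f v)) :
    2 * n + m ≤ Xi G ∧ ∀ d : ℕ, HasFOR G d → 2 * n + m ≤ d := by
  have hkey := key_bound G n m f hf hadj
  refine ⟨?_, hkey⟩
  obtain ⟨d0, hd0⟩ := exists_FOR G
  exact hkey (Xi G) (Nat.sInf_mem (⟨d0, hd0⟩ : Set.Nonempty {d | HasFOR G d}))
end
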